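/- arXiv:2208.08522 — 6 statements merged into one kernel-verified Lean document; each statement's English description precedes it below -/
import Mathlib

section
/- Let G be a directed Eulerian graph (without parallel edges or self-loops), and let (u,v),(v,w) be edges of G such that (u,v,w) appears in some Eulerian circuit of G. If d(v) = 1, or if d(v) = 2 and v is a cut node of U(G), then (u,v,w) appears in every Eulerian circuit of G. -/
/-- The underlying undirected simple graph of a directed graph `E` (no self-loops). -/
def underlyingUG {V : Type*} (E : V → V → Prop) : SimpleGraph V where
  Adj a b := a ≠ b ∧ (E a b ∨ E b a)
  symm := ⟨fun a b h => ⟨h.1.symm, h.2.symm⟩⟩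
  loopless := ⟨fun a h => h.1 rfl⟩

/-- Out-degree of `v`: number of out-neighbors. -/
noncomputable def outdeg {V : Type*} (E : V → V → Prop) (v : V) : ℕ := Set.ncard {w | E v w}

/-- In-degree of `v`: number of in-neighbors. -/
noncomputable def indeg {V : Type*} (E : V → V → Prop) (v : V) : ℕ := Set.ncard {u | E u v}

/-- The cyclic sequence of consecutive pairs of a circuit given as a vertex list. -/
def cyclicPairs {V : Type*} (c : List V) : List (V × V) := c.zip (c.rotate 1)

/-- `c` is an Eulerian circuit: a nonempty closed walk using every edge exactly once. -/
def IsEulerianCircuit {V : Type*} (E : V → V → Prop) (c : List V) : Prop :=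
  c ≠ [] ∧ (cyclicPairs c).Nodup ∧ ∀ p : V × V, p ∈ cyclicPairs c ↔ E p.1 p.2

/-- The walk `q` appears (cyclically, as consecutive edges) in the circuit `c`. -/
def Appears {V : Type*} (q c : List V) : Prop :=
  ∃ k, (q.zip q.tail) <:+: cyclicPairs (c.rotate k)

/-- `v` is a cut node of the connected undirected graph `H`. -/
def IsCutNode {V : Type*} (H : SimpleGraph V) (v : V) : Prop :=
  ¬ (H.induce {u | u ≠ v}).Connected

/-- The underlying undirected graph with node `v` (and incident edges) removed. -/
def delNode {V : Type*} (E : V → V → Prop) (v : V) := (underlyingUG E).induce {u | u ≠ v}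

section EulerAux

variable {V : Type*} {E : V → V → Prop}

lemma length_cyclicPairs (l : List V) : (cyclicPairs l).length = l.length := by
  simp [cyclicPairs]

lemma cyclicPairs_rotate (l : List V) (k : ℕ) :
    cyclicPairs (l.rotate k) = (cyclicPairs l).rotate k := by
  apply List.ext_getElem
  · simp [length_cyclicPairs]
  intro n h₁ h₂
  rw [List.getElem_rotate]
  simp only [cyclicPairs, List.getElem_zip, List.getElem_rotate, List.rotate_rotate,
    List.length_rotate, List.length_zip, min_self]
  have : (n + (k + 1)) % l.length = ((n + k) % l.length + 1) % l.length := by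
    rw [Nat.mod_add_mod, Nat.add_assoc]
  simp [this]

lemma zip_cons_tail (x : V) (l : List V) (h : l ≠ []) :
    (x :: l).zip l = (x, l.head h) :: l.zip l.tail := by
  cases l with
  | nil => exact absurd rfl h
  | cons y ys => rfl

lemma zip_snoc (xs : List V) : ∀ (x y : V),
    (x :: xs).zip (xs ++ [y]) = (x :: xs).zip xs ++ [((x :: xs).getLast (by simp), y)] := by
  induction xs with
  | nil => intro x y; rfl
  | cons z zs ih =>
      intro x y
      simp only [List.cons_append, List.zip_cons_cons, ih z y]
      simp [List.getLast_cons]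

lemma cyclicPairs_eq (l : List V) (h : l ≠ []) :
    cyclicPairs l = l.zip l.tail ++ [(l.getLast h, l.head h)] := by
  cases l with
  | nil => exact absurd rfl h
  | cons x xs =>
      show (x :: xs).zip ((x :: xs).rotate 1) = _
      rw [List.rotate_cons_succ, List.rotate_zero]
      simpa using zip_snoc xs x x

lemma zip_tail_append (l₁ l₂ : List V) (h₁ : l₁ ≠ []) (h₂ : l₂ ≠ []) :
    (l₁ ++ l₂).zip (l₁ ++ l₂).tail
      = l₁.zip l₁.tail ++ (l₁.getLast h₁, l₂.head h₂) :: l₂.zip l₂.tail := by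
  induction l₁ with
  | nil => exact absurd rfl h₁
  | cons x xs ih =>
      cases xs with
      | nil =>
          simp only [List.singleton_append, List.tail_cons]
          rw [zip_cons_tail x l₂ h₂]
          rfl
      | cons z zs =>
          have := ih (by simp)
          simp only [List.cons_append, List.tail_cons] at this ⊢
          rw [List.zip_cons_cons, this]
          simp [List.getLast_cons]

lemma chain'_of_zip {R : V → V → Prop} : ∀ {l : List V},
    (∀ p ∈ l.zip l.tail, R p.1 p.2) → l.Chain' R := by
  intro l
  induction l with
  | nil => intro _; exact List.isChain_nil
  | cons x xs ih =>
      intro h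
      cases xs with
      | nil => exact List.isChain_singleton x
      | cons y ys =>
          refine List.IsChain.cons_cons ?_ (ih ?_)
          · exact h (x, y) (by simp)
          · intro p hp
            exact h p (by
              simp only [List.tail_cons, List.zip_cons_cons]
              exact List.mem_cons_of_mem _ hp)

lemma circuit_rotate {c : List V} (h : IsEulerianCircuit E c) (k : ℕ) :
    IsEulerianCircuit E (c.rotate k) := by
  obtain ⟨hne, hnd, hmem⟩ := h
  refine ⟨by simp [hne], ?_, ?_⟩
  · rw [cyclicPairs_rotate]; exact List.nodup_rotate.mpr hnd
  · intro p; rw [cyclicPairs_rotate, List.mem_rotate]; exact hmem p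

lemma pairs_decomp (v : V) (B A : List V) (hB : B ≠ []) (hA : A ≠ []) :
    cyclicPairs (v :: B ++ v :: A)
      = (v, B.head hB) :: (B.zip B.tail ++ (B.getLast hB, v) :: (v, A.head hA)
          :: (A.zip A.tail ++ [(A.getLast hA, v)])) := by
  have hne : (v :: B ++ v :: A) ≠ [] := by simp
  rw [cyclicPairs_eq _ hne]
  have hgl : (v :: B ++ v :: A).getLast hne = A.getLast hA := by
    rw [List.getLast_append]
    simp [List.getLast_cons, hA]
  have hhd : (v :: B ++ v :: A).head hne = v := rfl
  rw [hgl, hhd]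
  rw [show (v :: B ++ v :: A) = (v :: B) ++ (v :: A) by simp]
  rw [zip_tail_append (v :: B) (v :: A) (by simp) (by simp)]
  simp only [List.tail_cons, List.head_cons]
  rw [zip_cons_tail v B hB]
  rw [zip_cons_tail v A hA, List.getLast_cons hB]
  simp

lemma pairs_cons_cons (a b : V) (s : List V) :
    ∃ r, cyclicPairs (a :: b :: s) = (a, b) :: (b, (s ++ [a]).head (by simp)) :: r := by
  cases s with
  | nil => exact ⟨[], rfl⟩
  | cons z zs =>
      refine ⟨(z :: zs).zip (zs ++ [a]), ?_⟩
      show ((a :: b :: z :: zs).zip ((a :: b :: z :: zs).rotate 1)) = _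
      rw [List.rotate_cons_succ, List.rotate_zero]
      rfl

lemma count_eq_outdeg [DecidableEq V] {c : List V} (h : IsEulerianCircuit E c) (x : V) :
    c.count x = outdeg E x := by
  classical
  obtain ⟨hne, hnd, hmem⟩ := h
  set P := cyclicPairs c with hP
  have hmapfst : P.map Prod.fst = c := List.map_fst_zip (by simp)
  have h1 : c.count x = P.countP (fun p => p.1 == x) := by
    conv_lhs => rw [← hmapfst]
    rw [List.count_eq_countP, List.countP_map]
    rfl
  set F := P.filter (fun p => p.1 == x) with hF
  have h2 : P.countP (fun p => p.1 == x) = F.length := by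
    rw [List.countP_eq_length_filter]
  have hFnd : F.Nodup := hnd.filter _
  have hfst : ∀ p ∈ F, p.1 = x := by
    intro p hp
    have := List.of_mem_filter hp
    simpa using this
  have hsndnd : (F.map Prod.snd).Nodup := by
    refine hFnd.map_on ?_
    intro p hp q hq hpq
    ext
    · rw [hfst p hp, hfst q hq]
    · exact hpq
  have hmem' : ∀ z, z ∈ F.map Prod.snd ↔ E x z := by
    intro z
    simp only [List.mem_map]
    constructor
    · rintro ⟨p, hp, rfl⟩
      have h3 := hfst p hp
      have h4 : p ∈ P := List.mem_of_mem_filter hp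
      have := (hmem p).mp h4
      rwa [h3] at this
    · intro hz
      refine ⟨(x, z), ?_, rfl⟩
      rw [List.mem_filter]
      exact ⟨(hmem (x, z)).mpr hz, by simp⟩
  have hset : {z | E x z} = ↑(F.map Prod.snd).toFinset := by
    ext z
    simp only [Set.mem_setOf_eq, Finset.mem_coe, List.mem_toFinset]
    exact (hmem' z).symm
  rw [h1, h2, outdeg, hset, Set.ncard_coe_finset, List.toFinset_card_of_nodup hsndnd]
  simp

lemma mem_of_edge {c : List V} (h : IsEulerianCircuit E c) {a b : V} (hab : E a b) :
    a ∈ c ∧ b ∈ c := by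
  obtain ⟨hne, hnd, hmem⟩ := h
  have : (a, b) ∈ cyclicPairs c := (hmem (a, b)).mpr hab
  have h2 := List.of_mem_zip this
  exact ⟨h2.1, List.mem_rotate.mp h2.2⟩

lemma rotate_pair {d : List V} (h : IsEulerianCircuit E d) {a b : V}
    (hne : a ≠ b) (hab : (a, b) ∈ cyclicPairs d) :
    ∃ k s, d.rotate k = a :: b :: s := by
  obtain ⟨hcne, hnd, hmem⟩ := h
  obtain ⟨i, hi, hPi⟩ := List.getElem_of_mem hab
  have hilt : i < d.length := by simpa [cyclicPairs] using hi
  have hn0 : 0 < d.length := Nat.lt_of_le_of_lt (Nat.zero_le _) hilt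
  simp only [cyclicPairs, List.getElem_zip] at hPi
  have ha : d[i] = a := congrArg Prod.fst hPi
  have hb : d[(i + 1) % d.length]'(Nat.mod_lt _ hn0) = b := by
    have h2 := congrArg Prod.snd hPi
    simp only [List.getElem_rotate] at h2
    simpa [Nat.add_comm] using h2
  have hn2 : 2 ≤ d.length := by
    by_contra hlt
    have hc1 : d.length = 1 := by omega
    apply hne
    rw [← ha, ← hb]
    congr 1
    rw [hc1, Nat.mod_one]
    omega
  have hlen : (d.rotate i).length = d.length := List.length_rotate d i
  obtain ⟨x, y, s, hrot⟩ : ∃ x y s, d.rotate i = x :: y :: s := by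
    cases hr : d.rotate i with
    | nil => rw [hr] at hlen; simp at hlen; omega
    | cons x t =>
        cases t with
        | nil => rw [hr] at hlen; simp at hlen; omega
        | cons y s => exact ⟨x, y, s, rfl⟩
  have h0 : x = a := by
    have e0 := List.getElem_of_eq hrot (show (0:ℕ) < (d.rotate i).length by omega)
    rw [List.getElem_rotate] at e0
    simp only [List.getElem_cons_zero, Nat.zero_add, Nat.mod_eq_of_lt hilt] at e0
    exact e0.symm.trans ha
  have h1 : y = b := by
    have e1 := List.getElem_of_eq hrot (show (1:ℕ) < (d.rotate i).length by omega)
    rw [List.getElem_rotate] at e1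
    simp only [List.getElem_cons_succ, List.getElem_cons_zero, Nat.add_comm 1 i] at e1
    exact e1.symm.trans hb
  exact ⟨i, s, by rw [hrot, h0, h1]⟩

lemma succ_unique {d : List V} (h : IsEulerianCircuit E d) {p q q' : V × V} {k k' : ℕ}
    (h1 : [p, q] <:+: cyclicPairs (d.rotate k))
    (h2 : [p, q'] <:+: cyclicPairs (d.rotate k')) : q = q' := by
  obtain ⟨hne, hnd, hmem⟩ := h
  set P := cyclicPairs d with hP
  have hlen : P.length = d.length := length_cyclicPairs d
  have hn0 : 0 < P.length := by
    rw [hlen]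
    exact List.length_pos_iff.mpr hne
  have key : ∀ (m : ℕ) (r : V × V), [p, r] <:+: cyclicPairs (d.rotate m) →
      ∃ (j : ℕ) (hj : j < P.length), P[j]'hj = p ∧
        P[(j+1) % P.length]'(Nat.mod_lt _ hn0) = r := by
    intro m r hinf
    rw [cyclicPairs_rotate, ← hP] at hinf
    obtain ⟨s, t, hst⟩ := hinf
    have hlenr : (P.rotate m).length = P.length := List.length_rotate P m
    have hslen : s.length + 1 < P.length := by
      have := congrArg List.length hst
      simp at this
      omega
    have e0 : (P.rotate m)[s.length]'(by omega) = p := by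
      rw [List.getElem_of_eq hst.symm]
      simp only [List.append_assoc]
      rw [List.getElem_append_right (Nat.le_refl s.length)]
      simp
    have e1 : (P.rotate m)[s.length + 1]'(by omega) = r := by
      rw [List.getElem_of_eq hst.symm]
      simp only [List.append_assoc]
      rw [List.getElem_append_right (by omega : s.length ≤ s.length + 1)]
      simp
    rw [List.getElem_rotate] at e0 e1
    refine ⟨(s.length + m) % P.length, Nat.mod_lt _ hn0, e0, ?_⟩
    have hidx : ((s.length + m) % P.length + 1) % P.length
        = (s.length + 1 + m) % P.length := by
      rw [Nat.mod_add_mod, Nat.add_assoc, Nat.add_comm m 1, ← Nat.add_assoc]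
    simp only [hidx]
    exact e1
  obtain ⟨j1, hj1, hp1, hq1⟩ := key k q h1
  obtain ⟨j2, hj2, hp2, hq2⟩ := key k' q' h2
  have hinj : Function.Injective P.get := List.nodup_iff_injective_get.mp hnd
  have hj : j1 = j2 := by
    have := hinj (show P.get ⟨j1, hj1⟩ = P.get ⟨j2, hj2⟩ by
      simp only [List.get_eq_getElem]
      rw [hp1, hp2])
    simpa using this
  subst hj
  exact hq1.symm.trans hq2

lemma exists_edge (hconn : (underlyingUG E).Connected) {x v : V} (hxv : x ≠ v) :
    ∃ z, E x z ∨ E z x := by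
  obtain ⟨p⟩ := hconn.preconnected x v
  cases p with
  | nil => exact absurd rfl hxv
  | cons h _ => exact ⟨_, (show _ ≠ _ ∧ (E _ _ ∨ E _ _) from h).2⟩

lemma chain_reach_aux (hloop : ∀ x : V, ¬ E x x) (v : V) (xs : List V) :
    ∀ (x : V), List.Chain' (fun a b => E a b) (x :: xs) → v ∉ x :: xs →
      ∀ (b : {u : V // u ≠ v}), b.1 ∈ x :: xs → ∀ (hx : x ≠ v),
      ((underlyingUG E).induce {u | u ≠ v}).Reachable ⟨x, hx⟩ b := by
  induction xs with
  | nil =>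
      intro x hch hv b hb hx
      have hbx : b.1 = x := by simpa using hb
      have : b = ⟨x, hx⟩ := Subtype.ext hbx
      rw [this]
  | cons y ys ih =>
      intro x hch hv b hb hx
      have hvy : v ∉ y :: ys := fun h => hv (List.mem_cons_of_mem _ h)
      have hy : y ≠ v := fun h => hvy (h ▸ List.mem_cons_self)
      have hxy : E x y := (List.isChain_cons_cons.mp hch).1
      have hne : x ≠ y := fun h => hloop x (h ▸ hxy)
      have hadj : ((underlyingUG E).induce {u | u ≠ v}).Adj ⟨x, hx⟩ ⟨y, hy⟩ :=
        (show x ≠ y ∧ (E x y ∨ E y x) from ⟨hne, Or.inl hxy⟩)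
      rw [List.mem_cons] at hb
      rcases hb with hb | hb
      · rw [show b = ⟨x, hx⟩ from Subtype.ext hb]
      · exact (hadj.reachable).trans
          (ih y (List.isChain_cons_cons.mp hch).2 hvy b hb hy)

lemma chain_reach (hloop : ∀ x : V, ¬ E x x) (v : V) {l : List V}
    (hch : List.Chain' (fun a b => E a b) l) (hv : v ∉ l) (a b : {u : V // u ≠ v})
    (ha : a.1 ∈ l) (hb : b.1 ∈ l) :
    ((underlyingUG E).induce {u | u ≠ v}).Reachable a b := by
  cases l with
  | nil => simp at ha
  | cons x xs =>
      have hx : x ≠ v := fun h => hv (h ▸ List.mem_cons_self)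
      exact (chain_reach_aux hloop v xs x hch hv a ha hx).symm.trans
        (chain_reach_aux hloop v xs x hch hv b hb hx)

end EulerAux

section EulerAux2

variable {V : Type*} {E : V → V → Prop}

/-- structural facts about a circuit of shape `v :: B ++ v :: A`. -/
lemma circuit_facts (hloop : ∀ x : V, ¬ E x x) {d : List V} (hd : IsEulerianCircuit E d)
    {v : V} {B A : List V} (hB : B ≠ []) (hA : A ≠ [])
    (hrot : d = v :: B ++ v :: A) (hvB : v ∉ B) (hvA : v ∉ A) :
    (∀ z, E z v → z = B.getLast hB ∨ z = A.getLast hA) ∧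
    (∀ z, E v z → z = B.head hB ∨ z = A.head hA) ∧
    List.Chain' (fun a b => E a b) B ∧ List.Chain' (fun a b => E a b) A := by
  subst hrot
  obtain ⟨hne, hnd, hmem⟩ := hd
  rw [pairs_decomp v B A hB hA] at hmem
  refine ⟨?_, ?_, ?_, ?_⟩
  · intro z hz
    have := (hmem (z, v)).mpr hz
    simp only [List.mem_cons, List.mem_append, Prod.mk.injEq] at this
    rcases this with ⟨h1, h2⟩ | h | ⟨h1, h2⟩ | ⟨h1, h2⟩ | h | ⟨h1, h2⟩ | h
    · exact absurd (h2.symm ▸ List.head_mem hB : v ∈ B) hvB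
    · exact absurd (List.of_mem_zip h).2 (fun hh => hvB (List.mem_of_mem_tail hh))
    · exact Or.inl h1
    · exact absurd (h2.symm ▸ List.head_mem hA : v ∈ A) hvA
    · exact absurd (List.of_mem_zip h).2 (fun hh => hvA (List.mem_of_mem_tail hh))
    · exact Or.inr h1
    · simp at h
  · intro z hz
    have := (hmem (v, z)).mpr hz
    simp only [List.mem_cons, List.mem_append, Prod.mk.injEq] at this
    rcases this with ⟨h1, h2⟩ | h | ⟨h1, h2⟩ | ⟨h1, h2⟩ | h | ⟨h1, h2⟩ | h
    · exact Or.inl h2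
    · exact absurd (List.of_mem_zip h).1 hvB
    · exact absurd hz (h2 ▸ hloop v)
    · exact Or.inr h2
    · exact absurd (List.of_mem_zip h).1 hvA
    · exact absurd hz (h2 ▸ hloop v)
    · simp at h
  · refine chain'_of_zip (fun p hp => (hmem p).mp ?_)
    simp only [List.mem_cons, List.mem_append]
    tauto
  · refine chain'_of_zip (fun p hp => (hmem p).mp ?_)
    simp only [List.mem_cons, List.mem_append]
    tauto

/-- a circuit whose `v`-pairing sends the in-edge `A.getLast = u` to out-edge `B.head`
contains the walk `(u, v, B.head)`. -/
lemma appears_of {c : List V} (hc : IsEulerianCircuit E c) {v : V} {B A : List V} {k : ℕ}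
    (hB : B ≠ []) (hA : A ≠ []) (hrot : c.rotate k = v :: B ++ v :: A) :
    ∃ m r, cyclicPairs (c.rotate m)
      = (A.getLast hA, v) :: (v, B.head hB) :: r := by
  set X : List (V × V) := (v, B.head hB) :: (B.zip B.tail ++ (B.getLast hB, v)
      :: (v, A.head hA) :: A.zip A.tail) with hX
  have hdecomp : cyclicPairs (c.rotate k) = X ++ [(A.getLast hA, v)] := by
    rw [hrot, pairs_decomp v B A hB hA, hX]
    simp
  refine ⟨k + X.length, B.zip B.tail ++ (B.getLast hB, v) :: (v, A.head hA)
      :: A.zip A.tail, ?_⟩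
  have h1 : cyclicPairs (c.rotate (k + X.length))
      = (cyclicPairs (c.rotate k)).rotate X.length := by
    rw [← List.rotate_rotate, cyclicPairs_rotate]
  rw [h1, hdecomp, List.rotate_eq_drop_append_take (by simp),
    List.drop_left, List.take_left]
  rw [hX]
  rfl

lemma circuit_struct [DecidableEq V] (hloop : ∀ x : V, ¬ E x x) {d : List V}
    (hd : IsEulerianCircuit E d) {v u : V} (hcount : d.count v = 2) (huv : E u v) :
    ∃ (k : ℕ) (B A : List V) (hB : B ≠ []) (hA : A ≠ []),
      d.rotate k = v :: B ++ v :: A ∧ v ∉ B ∧ v ∉ A ∧ A.getLast hA = u := by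
  have hvd : v ∈ d := (mem_of_edge hd huv).2
  -- rotate so that the circuit starts at v
  obtain ⟨i, hi, hdi⟩ := List.getElem_of_mem hvd
  have hlen : (d.rotate i).length = d.length := List.length_rotate d i
  obtain ⟨t, ht⟩ : ∃ t, d.rotate i = v :: t := by
    cases hr : d.rotate i with
    | nil =>
        rw [hr] at hlen
        simp at hlen
        omega
    | cons x t =>
        refine ⟨t, ?_⟩
        have e0 := List.getElem_of_eq hr (show (0:ℕ) < (d.rotate i).length by omega)
        rw [List.getElem_rotate] at e0
        simp only [List.getElem_cons_zero, Nat.zero_add, Nat.mod_eq_of_lt hi] at e0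
        rw [e0.symm.trans hdi]
  have hcnt' : (d.rotate i).count v = 2 := by
    rw [(List.rotate_perm d i).count_eq, hcount]
  rw [ht] at hcnt'
  simp only [List.count_cons_self] at hcnt'
  have hcntt : t.count v = 1 := by omega
  have hvt : v ∈ t := List.count_pos_iff.mp (by omega)
  obtain ⟨B, A, hBA⟩ := List.append_of_mem hvt
  have hcntBA : B.count v = 0 ∧ A.count v = 0 := by
    rw [hBA] at hcntt
    simp only [List.count_append, List.count_cons_self] at hcntt
    constructor <;> omega
  have hvB : v ∉ B := by
    intro h; exact absurd hcntBA.1 (by simpa using List.count_pos_iff.mpr h |>.ne')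
  have hvA : v ∉ A := by
    intro h; exact absurd hcntBA.2 (by simpa using List.count_pos_iff.mpr h |>.ne')
  have hrot : d.rotate i = v :: B ++ v :: A := by rw [ht, hBA]; rfl
  have hcirc : IsEulerianCircuit E (d.rotate i) := circuit_rotate hd i
  -- B and A are nonempty (no self-loops)
  have hBne : B ≠ [] := by
    rintro rfl
    obtain ⟨r, hr⟩ := pairs_cons_cons v v A
    have hrot' : d.rotate i = v :: v :: A := by simpa using hrot
    have : (v, v) ∈ cyclicPairs (d.rotate i) := by
      rw [hrot', hr]; simp
    exact hloop v ((hcirc.2.2 (v, v)).mp this)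
  have hAne : A ≠ [] := by
    rintro rfl
    have hne : (v :: B ++ [v]) ≠ [] := by simp
    have hgl : (v :: B ++ [v]).getLast hne = v := by
      rw [List.getLast_append]; simp
    have : (v, v) ∈ cyclicPairs (d.rotate i) := by
      rw [hrot]
      rw [cyclicPairs_eq _ (by simp : (v :: B ++ v :: []) ≠ [])]
      refine List.mem_append_right _ ?_
      simp only [List.mem_singleton, Prod.mk.injEq]
      exact ⟨hgl.symm, rfl⟩
    exact hloop v ((hcirc.2.2 (v, v)).mp this)
  -- u enters v, so u is the last of B or of A
  have hfacts := circuit_facts hloop hcirc hBne hAne hrot hvB hvA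
  rcases hfacts.1 u huv with hu | hu
  · -- u = B.getLast : swap the two segments by rotating further
    refine ⟨i + (B.length + 1), A, B, hAne, hBne, ?_, hvA, hvB, hu.symm⟩
    rw [← List.rotate_rotate, hrot]
    have : (B.length + 1) = (v :: B).length := by simp
    rw [show (v : V) :: B ++ v :: A = (v :: B) ++ (v :: A) from by simp]
    rw [this, List.rotate_eq_drop_append_take (by simp), List.drop_left, List.take_left]
  · exact ⟨i, B, A, hBne, hAne, hrot, hvB, hvA, hu.symm⟩

end EulerAux2


/-- If `(u,v,w)` appears in some Eulerian circuit and `d(v) = 1`, or `d(v) = 2` and `v`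
is a cut node of `U(G)`, then `(u,v,w)` appears in every Eulerian circuit of `G`. -/
theorem deg_or_cut_implies_safe {V : Type*} [Fintype V] (E : V → V → Prop)
    (hloop : ∀ x : V, ¬ E x x) (hconn : (underlyingUG E).Connected)
    (u v w : V) (huv : E u v) (hvw : E v w)
    (hone : ∃ c : List V, IsEulerianCircuit E c ∧ Appears [u, v, w] c)
    (hA : outdeg E v = 1 ∨ (outdeg E v = 2 ∧ IsCutNode (underlyingUG E) v)) :
    ∀ c : List V, IsEulerianCircuit E c → Appears [u, v, w] c := by
  classical
  intro c hc
  have huvne : u ≠ v := fun h => hloop v (h ▸ huv)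
  have hwv : w ≠ v := fun h => hloop v (h ▸ hvw)
  rcases hA with hA1 | ⟨hA2, hcut⟩
  · -- out-degree 1 case
    have huvmem : (u, v) ∈ cyclicPairs c := (hc.2.2 (u, v)).mpr huv
    obtain ⟨k, s, hrot⟩ := rotate_pair hc huvne huvmem
    obtain ⟨r, hr⟩ := pairs_cons_cons u v s
    have hcirc := circuit_rotate hc k
    have hz : E v ((s ++ [u]).head (by simp)) := by
      have hm : (v, (s ++ [u]).head (by simp)) ∈ cyclicPairs (c.rotate k) := by
        rw [hrot, hr]; simp
      exact (hcirc.2.2 _).mp hm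
    obtain ⟨a, ha⟩ := Set.ncard_eq_one.mp hA1
    have hw : w = a := by
      have : w ∈ {t | E v t} := hvw
      rw [ha] at this
      simpa using this
    have hzw : (s ++ [u]).head (by simp) = w := by
      have : (s ++ [u]).head (by simp) ∈ {t | E v t} := hz
      rw [ha] at this
      simp at this
      rw [this, hw]
    rw [hzw] at hr
    exact ⟨k, [], r, by rw [hrot, hr]; rfl⟩
  · -- out-degree 2, cut-node case
    by_contra hnap
    obtain ⟨c0, hc0, happ0⟩ := hone
    have hcnt : c.count v = 2 := by rw [count_eq_outdeg hc v, hA2]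
    have hcnt0 : c0.count v = 2 := by rw [count_eq_outdeg hc0 v, hA2]
    obtain ⟨k, B, A, hBne, hAne, hrot, hvB, hvA, hlastA⟩ :=
      circuit_struct hloop hc hcnt huv
    obtain ⟨k0, B0, A0, hB0ne, hA0ne, hrot0, hvB0, hvA0, hlastA0⟩ :=
      circuit_struct hloop hc0 hcnt0 huv
    have hfacts := circuit_facts hloop (circuit_rotate hc k) hBne hAne hrot hvB hvA
    have hfacts0 := circuit_facts hloop (circuit_rotate hc0 k0) hB0ne hA0ne hrot0 hvB0 hvA0
    -- the out-edge following u in c is not w (else `Appears` would hold)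
    have hheadB : B.head hBne ≠ w := by
      intro hbw
      apply hnap
      obtain ⟨m, r, hm⟩ := appears_of hc hBne hAne hrot
      exact ⟨m, [], r, by rw [hm, hlastA, hbw]; rfl⟩
    have hwA : w = A.head hAne := by
      rcases hfacts.2.1 w hvw with h | h
      · exact absurd h.symm hheadB
      · exact h
    have hB0w : B0.head hB0ne = w := by
      obtain ⟨m, r, hm⟩ := appears_of hc0 hB0ne hA0ne hrot0
      obtain ⟨m', hinf'⟩ := happ0
      have h1 : [(u, v), (v, B0.head hB0ne)] <:+: cyclicPairs (c0.rotate m) := by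
        rw [hm, hlastA0]
        exact ⟨[], r, rfl⟩
      have h2 : [(u, v), (v, w)] <:+: cyclicPairs (c0.rotate m') := by
        simpa using hinf'
      have := succ_unique hc0 h1 h2
      simpa using this
    -- this contradicts `v` being a cut node
    apply hcut
    rw [SimpleGraph.connected_iff]
    refine ⟨?_, ⟨⟨u, huvne⟩⟩⟩
    have hwmemA : w ∈ A := hwA ▸ List.head_mem hAne
    have humemA : u ∈ A := hlastA ▸ List.getLast_mem hAne
    have reachU : ∀ b : {x : V // x ≠ v},
        ((underlyingUG E).induce {u | u ≠ v}).Reachable b ⟨u, huvne⟩ := by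
      intro b
      obtain ⟨x, hx⟩ := b
      obtain ⟨z, hz⟩ := exists_edge hconn hx
      have hxc0 : x ∈ c0 := by
        rcases hz with h | h
        · exact (mem_of_edge hc0 h).1
        · exact (mem_of_edge hc0 h).2
      have hxBA : x ∈ B0 ∨ x ∈ A0 := by
        have hx2 : x ∈ c0.rotate k0 := List.mem_rotate.mpr hxc0
        rw [hrot0] at hx2
        simp only [List.cons_append, List.mem_cons, List.mem_append] at hx2
        rcases hx2 with h | h | h | h
        · exact absurd h hx
        · exact Or.inl h
        · exact absurd h hx
        · exact Or.inr h
      rcases hxBA with hxB | hxA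
      · have r1 := chain_reach hloop v hfacts0.2.2.1 hvB0 ⟨x, hx⟩ ⟨w, hwv⟩ hxB
          (hB0w ▸ List.head_mem hB0ne)
        have r2 := chain_reach hloop v hfacts.2.2.2 hvA ⟨w, hwv⟩ ⟨u, huvne⟩ hwmemA humemA
        exact r1.trans r2
      · exact chain_reach hloop v hfacts0.2.2.2 hvA0 ⟨x, hx⟩ ⟨u, huvne⟩ hxA
          (hlastA0 ▸ List.getLast_mem hA0ne)
    intro a b
    exact (reachU a).trans (reachU b).symm
end

section
/- Let G be a directed Eulerian graph without parallel edges or self-loops, and let v be a node with d(v) = 2 that is not a cut node of U(G), with in-neighbors u1, u2 and out-neighbors w1, w2. Then there exists an Eulerian circuit of G in which the walk (u1, v, w1) does not appear. -/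
namespace EulerAux
open List

variable {V : Type*}

/-- consecutive pairs of an open walk -/
def pr (l : List V) : List (V × V) := l.zip l.tail

@[simp] lemma pr_nil : pr ([] : List V) = [] := rfl
@[simp] lemma pr_single (a : V) : pr [a] = [] := rfl
lemma pr_cons_cons (a b : V) (t : List V) : pr (a :: b :: t) = (a, b) :: pr (b :: t) := rfl

lemma zip_extend : ∀ (x y ext : List V), y.length ≤ x.length → (x ++ ext).zip y = x.zip y
  | x, [], ext, _ => by simp
  | [], b :: y', ext, h => by simp at h
  | a :: x', b :: y', ext, h => by
    simp only [cons_append, zip_cons_cons, cons.injEq, true_and]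
    exact zip_extend x' y' ext (by simpa using h)

lemma cp_eq_pr (a : V) (l : List V) : cyclicPairs (a :: l) = pr ((a :: l) ++ [a]) := by
  show (a :: l).zip ((a :: l).rotate 1) = ((a :: l) ++ [a]).zip (((a :: l) ++ [a]).tail)
  have h1 : (a :: l).rotate 1 = l ++ [a] := by
    simpa using List.rotate_cons_succ l a 0
  have h2 : ((a :: l) ++ [a]).tail = l ++ [a] := by simp
  rw [h1, h2, zip_extend] ; simp

lemma pr_append (m : V) (Y : List V) : ∀ X : List V, pr (X ++ m :: Y) = pr (X ++ [m]) ++ pr (m :: Y)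
  | [] => by simp
  | [x] => by simp [pr_cons_cons]
  | x :: x' :: X' => by
    have ih := pr_append m Y (x' :: X')
    simp only [cons_append, pr_cons_cons] at *
    rw [ih]

lemma pr_concat (m : V) : ∀ (l : List V) (h : l ≠ []), pr (l ++ [m]) = pr l ++ [(l.getLast h, m)]
  | [x], _ => by simp [pr_cons_cons]
  | x :: x' :: t, _ => by
    have ih := pr_concat m (x' :: t) (by simp)
    show pr (x :: x' :: (t ++ [m])) = pr (x :: x' :: t) ++ [((x :: x' :: t).getLast (by simp), m)]
    have hg : (x :: x' :: t).getLast (by simp) = (x' :: t).getLast (by simp) :=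
      List.getLast_cons _
    rw [pr_cons_cons, pr_cons_cons, hg]
    simp only [cons_append] at ih
    rw [ih]; simp

lemma pr_cons (a : V) (r : List V) (h : r ≠ []) : pr (a :: r) = (a, r.head h) :: pr r := by
  cases r with
  | nil => exact absurd rfl h
  | cons b t => rfl

lemma mem_pr_left {p : V × V} {l : List V} (h : p ∈ pr l) : p.1 ∈ l :=
  (List.of_mem_zip (by exact h)).1

lemma mem_pr_right {p : V × V} {l : List V} (h : p ∈ pr l) : p.2 ∈ l := by
  have := (List.of_mem_zip (a := p.1) (b := p.2) (by exact h)).2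
  exact List.mem_of_mem_tail this

lemma pr_subset_cp : ∀ (L : List (V)) , pr L ⊆ cyclicPairs L
  | [] => by simp [cyclicPairs]
  | h :: T => by
    rw [cp_eq_pr, pr_concat _ _ (by simp)]
    exact fun x hx => mem_append_left _ hx

lemma mem_cp_of_split {L s t : List V} {e f : V} (h : L = s ++ e :: f :: t) :
    (e, f) ∈ cyclicPairs L := by
  apply pr_subset_cp
  rw [h, show s ++ e :: f :: t = s ++ e :: (f :: t) from rfl, pr_append]
  exact mem_append_right _ (by rw [pr_cons_cons]; exact mem_cons_self)

lemma wrap_mem_cp (L : List V) (h : L ≠ []) : (L.getLast h, L.head h) ∈ cyclicPairs L := by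
  cases L with
  | nil => exact absurd rfl h
  | cons a T =>
    rw [cp_eq_pr, pr_concat _ _ (by simp)]
    exact mem_append_right _ (by simp)

lemma zip_fst_unique {α β : Type*} : ∀ {a : List α} {b : List β}, a.Nodup →
    ∀ {x : α} {y y' : β}, (x, y) ∈ a.zip b → (x, y') ∈ a.zip b → y = y'
  | [], _, _, _, _, _, h, _ => by simp at h
  | a :: as, [], _, _, _, _, h, _ => by simp at h
  | a :: as, b :: bs, hnd, x, y, y', h1, h2 => by
    simp only [zip_cons_cons, mem_cons, Prod.mk.injEq] at h1 h2
    rcases h1 with ⟨hx, hy⟩ | h1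
    · rcases h2 with ⟨hx', hy'⟩ | h2
      · rw [hy, hy']
      · exfalso
        have : x ∈ as := (List.of_mem_zip h2).1
        rw [hx] at this
        exact (List.nodup_cons.mp hnd).1 this
    · rcases h2 with ⟨hx', hy'⟩ | h2
      · exfalso
        have : x ∈ as := (List.of_mem_zip h1).1
        rw [hx'] at this
        exact (List.nodup_cons.mp hnd).1 this
      · exact zip_fst_unique (List.nodup_cons.mp hnd).2 h1 h2

lemma zip_rotate {α β : Type*} (a : List α) (b : List β) (h : a.length = b.length) (n : ℕ) :
    (a.zip b).rotate n = (a.rotate n).zip (b.rotate n) := by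
  apply List.ext_getElem
  · simp [h]
  · intro i h1 h2
    simp only [List.getElem_rotate, List.getElem_zip, List.length_zip, h, min_self]

lemma cp_rotate (l : List V) (n : ℕ) : cyclicPairs (l.rotate n) = (cyclicPairs l).rotate n := by
  show (l.rotate n).zip ((l.rotate n).rotate 1) = (l.zip (l.rotate 1)).rotate n
  rw [List.rotate_rotate, Nat.add_comm, ← List.rotate_rotate,
    zip_rotate _ _ (by simp) n]

lemma not_appears_of (c : List V) (x y z : V)
    (h : ((x, y), (y, z)) ∉ cyclicPairs (cyclicPairs c)) : ¬ Appears [x, y, z] c := by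
  rintro ⟨k, s, t, hst⟩
  apply h
  have hst' : cyclicPairs (c.rotate k) = s ++ (x, y) :: (y, z) :: t := by
    rw [← hst]; simp
  have hmem : ((x, y), (y, z)) ∈ cyclicPairs (cyclicPairs (c.rotate k)) :=
    mem_cp_of_split hst' 
  rw [cp_rotate, cp_rotate] at hmem
  exact (List.mem_rotate).mp hmem


lemma head_append_cons (l : List V) (m : V) (t t' : List V) :
    (l ++ m :: t).head (by simp) = (l ++ m :: t').head (by simp) := by
  cases l <;> simp

lemma getLast_append_cons (l : List V) (m : V) (t : List V) :
    (l ++ m :: t).getLast (by simp) = (m :: t).getLast (by simp) := by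
  rw [List.getLast_append]
  simp

lemma structure_lemma (v : V) (X Y : List V) (hX : X ≠ []) (hY : Y ≠ [])
    (hvX : v ∉ X) (hvY : v ∉ Y)
    (hnd : (cyclicPairs (v :: X ++ v :: Y)).Nodup) :
    X.head hX ≠ Y.head hY ∧ X.getLast hX ≠ Y.getLast hY ∧
    ((X.getLast hX, v), (v, Y.head hY)) ∈ cyclicPairs (cyclicPairs (v :: X ++ v :: Y)) ∧
    ((Y.getLast hY, v), (v, X.head hX)) ∈ cyclicPairs (cyclicPairs (v :: X ++ v :: Y)) ∧
    ∀ u w, ((u, v), (v, w)) ∈ cyclicPairs (cyclicPairs (v :: X ++ v :: Y)) →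
      (u = X.getLast hX ∧ w = Y.head hY) ∨ (u = Y.getLast hY ∧ w = X.head hX) := by
  set x0 := X.head hX
  set y0 := Y.head hY
  set a := X.getLast hX
  set b := Y.getLast hY
  set M := cyclicPairs (v :: X ++ v :: Y) with hMdef
  have blockM : M = pr ((v :: X) ++ [v]) ++ pr ((v :: Y) ++ [v]) := by
    rw [hMdef, show v :: X ++ v :: Y = v :: (X ++ v :: Y) from rfl, cp_eq_pr]
    rw [show (v :: (X ++ v :: Y)) ++ [v] = (v :: X) ++ v :: (Y ++ [v]) by simp]
    rw [pr_append]
    rfl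
  have bl1 : pr ((v :: X) ++ [v]) = (v, x0) :: (pr X ++ [(a, v)]) := by
    rw [show (v :: X) ++ [v] = v :: (X ++ [v]) from rfl,
      pr_cons v (X ++ [v]) (by simp), pr_concat v X hX]
    congr 1
    · congr 1
      exact (List.head_append_of_ne_nil hX)
  have bl2 : pr ((v :: Y) ++ [v]) = (v, y0) :: (pr Y ++ [(b, v)]) := by
    rw [show (v :: Y) ++ [v] = v :: (Y ++ [v]) from rfl,
      pr_cons v (Y ++ [v]) (by simp), pr_concat v Y hY]
    congr 1
    · congr 1
      exact (List.head_append_of_ne_nil hY)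
  have hMsplit : M = ((v, x0) :: pr X) ++ (a, v) :: (v, y0) :: (pr Y ++ [(b, v)]) := by
    rw [blockM, bl1, bl2]; simp
  -- memberships in M
  have hvx0M : (v, x0) ∈ pr ((v :: X) ++ [v]) := by rw [bl1]; exact mem_cons_self
  have hvy0M : (v, y0) ∈ pr ((v :: Y) ++ [v]) := by rw [bl2]; exact mem_cons_self
  have havM : (a, v) ∈ pr ((v :: X) ++ [v]) := by
    rw [bl1]; exact mem_cons_of_mem _ (mem_append_right _ (by simp))
  have hbvM : (b, v) ∈ pr ((v :: Y) ++ [v]) := by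
    rw [bl2]; exact mem_cons_of_mem _ (mem_append_right _ (by simp))
  have hdisj : (pr ((v :: X) ++ [v])).Disjoint (pr ((v :: Y) ++ [v])) := by
    have h := hnd
    rw [blockM] at h
    exact (List.nodup_append'.mp h).2.2
  have hx0y0 : x0 ≠ y0 := by
    intro h
    exact hdisj hvx0M (by rw [h] at hvx0M ⊢; exact hvy0M)
  have hab : a ≠ b := by
    intro h
    exact hdisj havM (by rw [h] at havM ⊢; exact hbvM)
  -- claim 1a
  have m1 : ((a, v), (v, y0)) ∈ cyclicPairs M := by
    apply mem_cp_of_split (s := (v, x0) :: pr X) (t := pr Y ++ [(b, v)])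
    exact hMsplit
  -- claim 1b : wrap-around
  have m2 : ((b, v), (v, x0)) ∈ cyclicPairs M := by
    have hMne : M ≠ [] := by rw [hMsplit]; simp
    have hlast : M.getLast hMne = (b, v) := by
      have : M = (((v, x0) :: pr X) ++ ((a, v) :: (v, y0) :: pr Y)) ++ [(b, v)] := by
        rw [hMsplit]; simp
      rw [show M.getLast hMne = ((((v, x0) :: pr X) ++ ((a, v) :: (v, y0) :: pr Y)) ++ [(b, v)]).getLast (by simp) by congr 1]
      rw [getLast_append_cons]
      rfl
    have hhead : M.head hMne = (v, x0) := by
      simp only [hMsplit, cons_append, head_cons]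
    have := wrap_mem_cp M hMne
    rw [hlast, hhead] at this
    exact this
  refine ⟨hx0y0, hab, m1, m2, ?_⟩
  intro u w hm
  have huvM : (u, v) ∈ M := (List.of_mem_zip hm).1
  have hx0X : x0 ∈ X := List.head_mem hX
  have hy0Y : y0 ∈ Y := List.head_mem hY
  rw [blockM, mem_append] at huvM
  have hcase : u = a ∨ u = b := by
    rcases huvM with h1 | h2
    · rw [bl1, mem_cons] at h1
      rcases h1 with h1 | h1
      · exact absurd ((Prod.mk.injEq _ _ _ _).mp h1).2.symm
          (fun hvx => hvX (hvx ▸ hx0X))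
      · rw [mem_append] at h1
        rcases h1 with h1 | h1
        · exact absurd (mem_pr_right h1) hvX
        · left; simp at h1; exact h1
    · rw [bl2, mem_cons] at h2
      rcases h2 with h2 | h2
      · exact absurd ((Prod.mk.injEq _ _ _ _).mp h2).2.symm
          (fun hvy => hvY (hvy ▸ hy0Y))
      · rw [mem_append] at h2
        rcases h2 with h2 | h2
        · exact absurd (mem_pr_right h2) hvY
        · right; simp at h2; exact h2
  rcases hcase with rfl | rfl
  · left
    refine ⟨rfl, ?_⟩
    have := zip_fst_unique hnd (x := (a, v)) hm m1
    exact ((Prod.mk.injEq _ _ _ _).mp this).2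
  · right
    refine ⟨rfl, ?_⟩
    have := zip_fst_unique hnd (x := (b, v)) hm m2
    exact ((Prod.mk.injEq _ _ _ _).mp this).2

lemma count_eq_countP_zip [DecidableEq V] (v : V) :
    ∀ (a b : List V), a.length = b.length →
      a.count v = (a.zip b).countP (fun p => p.1 == v)
  | [], [], _ => rfl
  | [], b :: bs, h => by simp at h
  | a :: as, [], h => by simp at h
  | a :: as, b :: bs, h => by
    rw [List.zip_cons_cons, List.count_cons, List.countP_cons,
      count_eq_countP_zip v as bs (by simpa using h)]

end EulerAux




set_option maxHeartbeats 2000000 in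
/-- If `d(v) = 2` and `v` is not a cut node of `U(G)`, with in-neighbors `u1, u2` and
out-neighbors `w1, w2`, then some Eulerian circuit avoids the walk `(u1, v, w1)`. -/
theorem non_cut_degree_two_not_safe {V : Type*} [Fintype V] (E : V → V → Prop)
    (hloop : ∀ x : V, ¬ E x x) (hconn : (underlyingUG E).Connected)
    (heul : ∃ c : List V, IsEulerianCircuit E c)
    (v u1 u2 w1 w2 : V) (hu12 : u1 ≠ u2) (hw12 : w1 ≠ w2)
    (hin : {u : V | E u v} = {u1, u2}) (hout : {w : V | E v w} = {w1, w2})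
    (hnotcut : ¬ IsCutNode (underlyingUG E) v) :
    ∃ c : List V, IsEulerianCircuit E c ∧ ¬ Appears [u1, v, w1] c := by
  classical
  obtain ⟨c, hcne, hcnd, hcmem⟩ := heul
  have hEvw1 : E v w1 := by
    have h1 : w1 ∈ ({w1, w2} : Set V) := Set.mem_insert _ _
    rw [← hout] at h1; exact h1
  have hEvw2 : E v w2 := by
    have h1 : w2 ∈ ({w1, w2} : Set V) := Set.mem_insert_of_mem _ rfl
    rw [← hout] at h1; exact h1
  have houtmem : ∀ w, E v w → w = w1 ∨ w = w2 := by
    intro w hw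
    have : w ∈ ({w1, w2} : Set V) := hout ▸ hw
    simpa using this
  -- v occurs exactly twice in c
  have hcount : c.count v = 2 := by
    have hlen : c.length = (c.rotate 1).length := by simp
    rw [EulerAux.count_eq_countP_zip v c (c.rotate 1) hlen, List.countP_eq_length_filter]
    have hCP : c.zip (c.rotate 1) = cyclicPairs c := rfl
    set F := (c.zip (c.rotate 1)).filter (fun p => p.1 == v) with hF
    have hFnd : F.Nodup := List.Nodup.filter _ (by rw [hCP]; exact hcnd)
    have hmemF : ∀ p : V × V, p ∈ F ↔ (p ∈ cyclicPairs c ∧ p.1 = v) := by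
      intro p; rw [hF, List.mem_filter]; simp [hCP]
    have h1 : (v, w1) ∈ F := (hmemF _).mpr ⟨(hcmem _).mpr hEvw1, rfl⟩
    have h2 : (v, w2) ∈ F := (hmemF _).mpr ⟨(hcmem _).mpr hEvw2, rfl⟩
    have hsub : F ⊆ [(v, w1), (v, w2)] := by
      intro p hp
      obtain ⟨hpc, hpv⟩ := (hmemF p).mp hp
      have hE := (hcmem p).mp hpc
      rw [hpv] at hE
      rcases houtmem _ hE with h | h <;>
        simp [Prod.ext_iff, hpv, h]
    have hsup : [(v, w1), (v, w2)] ⊆ F := by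
      intro p hp
      simp only [List.mem_cons, List.not_mem_nil, or_false] at hp
      rcases hp with rfl | rfl
      exacts [h1, h2]
    have hnd2 : ([(v, w1), (v, w2)]).Nodup := by simp [hw12]
    have l1 := (List.subperm_of_subset hFnd hsub).length_le
    have l2 := (List.subperm_of_subset hnd2 hsup).length_le
    simp only [List.length_cons, List.length_nil] at l1 l2
    omega
  have hvc : v ∈ c := by
    have := (hcmem (v, w1)).mpr hEvw1
    exact (List.of_mem_zip this).1
  obtain ⟨s, t, hst⟩ := List.append_of_mem hvc
  have hc1eq : c.rotate s.length = v :: (t ++ s) := by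
    rw [hst, List.rotate_eq_drop_append_take (by simp)]
    rw [show s ++ v :: t = s ++ (v :: t) from rfl, List.drop_left, List.take_left]
    simp
  have hnd1' : (cyclicPairs (v :: (t ++ s))).Nodup := by
    rw [← hc1eq, EulerAux.cp_rotate]
    exact ((List.rotate_perm (cyclicPairs c) s.length).nodup_iff).mpr hcnd
  have hmem1' : ∀ p : V × V, p ∈ cyclicPairs (v :: (t ++ s)) ↔ E p.1 p.2 := by
    intro p
    rw [← hc1eq, EulerAux.cp_rotate, List.mem_rotate]
    exact hcmem p
  have hcount1 : (t ++ s).count v = 1 := by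
    have hpc := (List.rotate_perm c s.length).count_eq v
    rw [hc1eq, hcount, List.count_cons] at hpc
    simp [List.count_append] at hpc ⊢
    omega
  have hvl : v ∈ t ++ s := by
    by_contra h
    rw [List.count_eq_zero.mpr h] at hcount1
    omega
  obtain ⟨P, Q, hPQ⟩ := List.append_of_mem hvl
  have hvPQ : v ∉ P ∧ v ∉ Q := by
    have hc' : (t ++ s).count v = P.count v + (Q.count v + 1) := by
      rw [hPQ]; simp [List.count_append, List.count_cons]
    constructor <;> (rw [← List.count_eq_zero]; omega)
  rw [hPQ] at hnd1' hmem1'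
  have hnd1 : (cyclicPairs (v :: P ++ v :: Q)).Nodup := hnd1'
  have hmem1 : ∀ p : V × V, p ∈ cyclicPairs (v :: P ++ v :: Q) ↔ E p.1 p.2 := hmem1'
  have hPne : P ≠ [] := by
    intro h
    subst h
    have hm : (v, v) ∈ cyclicPairs (v :: ([] : List V) ++ v :: Q) := by
      rw [show (v :: ([] : List V) ++ v :: Q) = v :: (v :: Q) from rfl, EulerAux.cp_eq_pr]
      rw [show ((v :: v :: Q) ++ [v]) = v :: v :: (Q ++ [v]) from rfl, EulerAux.pr_cons_cons]
      exact List.mem_cons_self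
    exact hloop v ((hmem1 _).mp hm)
  have hQne : Q ≠ [] := by
    intro h
    subst h
    have hm : (v, v) ∈ cyclicPairs (v :: P ++ v :: ([] : List V)) := by
      rw [show (v :: P ++ v :: ([] : List V)) = v :: (P ++ [v]) from rfl, EulerAux.cp_eq_pr]
      rw [show ((v :: (P ++ [v])) ++ [v]) = (v :: P) ++ v :: [v] by simp, EulerAux.pr_append]
      refine List.mem_append_right _ ?_
      rw [show ([v, v] : List V) = v :: v :: [] from rfl, EulerAux.pr_cons_cons]
      exact List.mem_cons_self
    exact hloop v ((hmem1 _).mp hm)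
  obtain ⟨hx0y0, habd, m1, m2, fwd⟩ :=
    EulerAux.structure_lemma v P Q hPne hQne hvPQ.1 hvPQ.2 hnd1
  by_cases hbad : ((u1, v), (v, w1)) ∈ cyclicPairs (cyclicPairs (v :: P ++ v :: Q))
  · -- need to modify the circuit
    have hcase := fwd u1 w1 hbad
    -- find a common vertex of P and Q
    have hz : ∃ z, z ∈ P ∧ z ∈ Q := by
      by_contra hno
      push_neg at hno
      have hconn' : ((underlyingUG E).induce {u : V | u ≠ v}).Connected := not_not.mp hnotcut
      have hblock : ∀ γ δ : V, (γ, δ) ∈ cyclicPairs (v :: P ++ v :: Q) →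
          (γ ∈ (v :: P) ++ [v] ∧ δ ∈ (v :: P) ++ [v]) ∨
          (γ ∈ (v :: Q) ++ [v] ∧ δ ∈ (v :: Q) ++ [v]) := by
        intro γ δ hgd
        have hsplitCP : cyclicPairs (v :: P ++ v :: Q) =
            EulerAux.pr ((v :: P) ++ [v]) ++ EulerAux.pr ((v :: Q) ++ [v]) := by
          rw [show v :: P ++ v :: Q = v :: (P ++ v :: Q) from rfl, EulerAux.cp_eq_pr,
            show (v :: (P ++ v :: Q)) ++ [v] = (v :: P) ++ v :: (Q ++ [v]) by simp,
            EulerAux.pr_append]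
          rfl
        rw [hsplitCP, List.mem_append] at hgd
        rcases hgd with h | h
        · exact Or.inl ⟨EulerAux.mem_pr_left h, EulerAux.mem_pr_right h⟩
        · exact Or.inr ⟨EulerAux.mem_pr_left h, EulerAux.mem_pr_right h⟩
      have hmemPQ : ∀ (R : List V) (γ : V), γ ≠ v → γ ∈ (v :: R) ++ [v] → γ ∈ R := by
        intro R γ hγ hm
        rcases List.mem_append.mp hm with h | h
        · rcases List.mem_cons.mp h with h | h
          · exact absurd h hγ
          · exact h
        · exact absurd (List.mem_singleton.mp h) hγ
      have hmemP := hmemPQ P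
      have hmemQ := hmemPQ Q
      have hedge : ∀ α β : V, α ≠ v → β ≠ v → (E α β ∨ E β α) →
          ((α ∈ P ∧ β ∈ P) ∨ (α ∈ Q ∧ β ∈ Q)) := by
        intro α β hα hβ hE
        rcases hE with h | h
        · rcases hblock α β ((hmem1 (α, β)).mpr h) with ⟨h1, h2⟩ | ⟨h1, h2⟩
          · exact Or.inl ⟨hmemP _ hα h1, hmemP _ hβ h2⟩
          · exact Or.inr ⟨hmemQ _ hα h1, hmemQ _ hβ h2⟩
        · rcases hblock β α ((hmem1 (β, α)).mpr h) with ⟨h1, h2⟩ | ⟨h1, h2⟩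
          · exact Or.inl ⟨hmemP _ hα h2, hmemP _ hβ h1⟩
          · exact Or.inr ⟨hmemQ _ hα h2, hmemQ _ hβ h1⟩
      have hx0v : P.head hPne ≠ v := fun h => hvPQ.1 (h ▸ List.head_mem hPne)
      have hy0v : Q.head hQne ≠ v := fun h => hvPQ.2 (h ▸ List.head_mem hQne)
      have key : ∀ (sv tv : {u : V // u ∈ {u : V | u ≠ v}})
          (w : ((underlyingUG E).induce {u : V | u ≠ v}).Walk sv tv),
          (sv : V) ∈ P → (tv : V) ∈ P := by
        intro sv tv w
        induction w with
        | nil => exact id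
        | @cons aa bb cc hadj w ih =>
          intro hs
          apply ih
          have hadj' : (underlyingUG E).Adj ↑aa ↑bb := by
            simpa [SimpleGraph.induce] using hadj
          obtain ⟨hne', hEor⟩ := (show (↑aa : V) ≠ ↑bb ∧ (E ↑aa ↑bb ∨ E ↑bb ↑aa) from hadj')
          rcases hedge _ _ aa.2 bb.2 hEor with ⟨_, hbP⟩ | ⟨haQ, _⟩
          · exact hbP
          · exact absurd haQ (hno _ hs)
      obtain ⟨w⟩ := hconn'.preconnected ⟨P.head hPne, hx0v⟩ ⟨Q.head hQne, hy0v⟩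
      have : (Q.head hQne) ∈ P := key _ _ w (List.head_mem hPne)
      exact hno _ this (List.head_mem hQne)
    obtain ⟨z, hzP, hzQ⟩ := hz
    have hzv : z ≠ v := fun h => hvPQ.1 (h ▸ hzP)
    obtain ⟨P1, P2, hP12⟩ := List.append_of_mem hzP
    obtain ⟨Q1, Q2, hQ12⟩ := List.append_of_mem hzQ
    subst hP12
    subst hQ12
    -- decomposition tools
    have bdec : ∀ (A B : List V), cyclicPairs (v :: A ++ v :: B) =
        EulerAux.pr ((v :: A) ++ [v]) ++ EulerAux.pr ((v :: B) ++ [v]) := by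
      intro A B
      rw [show v :: A ++ v :: B = v :: (A ++ v :: B) from rfl, EulerAux.cp_eq_pr,
        show (v :: (A ++ v :: B)) ++ [v] = (v :: A) ++ v :: (B ++ [v]) by simp,
        EulerAux.pr_append]
      rfl
    have bsplit : ∀ (R1 R2 : List V),
        EulerAux.pr ((v :: (R1 ++ z :: R2)) ++ [v]) =
        EulerAux.pr ((v :: R1) ++ [z]) ++ EulerAux.pr ((z :: R2) ++ [v]) := by
      intro R1 R2
      rw [show (v :: (R1 ++ z :: R2)) ++ [v] = (v :: R1) ++ z :: (R2 ++ [v]) by simp,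
        EulerAux.pr_append]
      rfl
    have d1 : cyclicPairs (v :: (P1 ++ z :: P2) ++ v :: (Q1 ++ z :: Q2)) =
        (EulerAux.pr ((v :: P1) ++ [z]) ++ EulerAux.pr ((z :: P2) ++ [v])) ++
        (EulerAux.pr ((v :: Q1) ++ [z]) ++ EulerAux.pr ((z :: Q2) ++ [v])) := by
      rw [bdec, bsplit, bsplit]
    have d2 : cyclicPairs (v :: (P1 ++ z :: Q2) ++ v :: (Q1 ++ z :: P2)) =
        (EulerAux.pr ((v :: P1) ++ [z]) ++ EulerAux.pr ((z :: Q2) ++ [v])) ++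
        (EulerAux.pr ((v :: Q1) ++ [z]) ++ EulerAux.pr ((z :: P2) ++ [v])) := by
      rw [bdec, bsplit, bsplit]
    have hpermCP : List.Perm (cyclicPairs (v :: (P1 ++ z :: Q2) ++ v :: (Q1 ++ z :: P2)))
        (cyclicPairs (v :: (P1 ++ z :: P2) ++ v :: (Q1 ++ z :: Q2))) := by
      rw [d1, d2, List.perm_iff_count]
      intro p
      simp only [List.count_append]
      omega
    have hnd2 : (cyclicPairs (v :: (P1 ++ z :: Q2) ++ v :: (Q1 ++ z :: P2))).Nodup :=
      (hpermCP.nodup_iff).mpr hnd1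
    have hmem2 : ∀ p : V × V,
        p ∈ cyclicPairs (v :: (P1 ++ z :: Q2) ++ v :: (Q1 ++ z :: P2)) ↔ E p.1 p.2 := by
      intro p
      rw [hpermCP.mem_iff]
      exact hmem1 p
    have hX2ne : (P1 ++ z :: Q2) ≠ [] := by simp
    have hY2ne : (Q1 ++ z :: P2) ≠ [] := by simp
    have hvP1 : v ∉ P1 := fun h => hvPQ.1 (List.mem_append_left _ h)
    have hvP2 : v ∉ P2 := fun h => hvPQ.1 (List.mem_append_right _ (List.mem_cons_of_mem _ h))
    have hvQ1 : v ∉ Q1 := fun h => hvPQ.2 (List.mem_append_left _ h)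
    have hvQ2 : v ∉ Q2 := fun h => hvPQ.2 (List.mem_append_right _ (List.mem_cons_of_mem _ h))
    have hvX2 : v ∉ (P1 ++ z :: Q2) := by
      simp only [List.mem_append, List.mem_cons, not_or]
      exact ⟨hvP1, fun h => hzv h.symm, hvQ2⟩
    have hvY2 : v ∉ (Q1 ++ z :: P2) := by
      simp only [List.mem_append, List.mem_cons, not_or]
      exact ⟨hvQ1, fun h => hzv h.symm, hvP2⟩
    obtain ⟨_, _, _, _, fwd2⟩ :=
      EulerAux.structure_lemma v (P1 ++ z :: Q2) (Q1 ++ z :: P2) hX2ne hY2ne hvX2 hvY2 hnd2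
    have hX2head : (P1 ++ z :: Q2).head hX2ne = (P1 ++ z :: P2).head hPne :=
      EulerAux.head_append_cons P1 z Q2 P2
    have hY2head : (Q1 ++ z :: P2).head hY2ne = (Q1 ++ z :: Q2).head hQne :=
      EulerAux.head_append_cons Q1 z P2 Q2
    have hX2last : (P1 ++ z :: Q2).getLast hX2ne = (Q1 ++ z :: Q2).getLast hQne := by
      have e1 := EulerAux.getLast_append_cons P1 z Q2
      have e2 := EulerAux.getLast_append_cons Q1 z Q2
      exact e1.trans e2.symm
    have hY2last : (Q1 ++ z :: P2).getLast hY2ne = (P1 ++ z :: P2).getLast hPne := by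
      have e1 := EulerAux.getLast_append_cons Q1 z P2
      have e2 := EulerAux.getLast_append_cons P1 z P2
      exact e1.trans e2.symm
    refine ⟨v :: (P1 ++ z :: Q2) ++ v :: (Q1 ++ z :: P2), ⟨by simp, hnd2, hmem2⟩,
      EulerAux.not_appears_of _ _ _ _ ?_⟩
    intro hbad2
    have hcase2 := fwd2 u1 w1 hbad2
    rcases hcase with ⟨h1, h2⟩ | ⟨h1, h2⟩ <;> rcases hcase2 with ⟨h3, h4⟩ | ⟨h3, h4⟩
    · -- u1 = P.last ∧ w1 = Q.head ; u1 = X2.last = Q.last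
      exact habd ((h1.symm.trans h3).trans hX2last)
    · -- w1 = Q.head ; w1 = X2.head = P.head
      exact hx0y0 ((h4.trans hX2head).symm.trans h2)
    · -- w1 = P.head ; w1 = Y2.head = Q.head
      exact hx0y0 (h2.symm.trans (h4.trans hY2head))
    · -- u1 = Q.last ; u1 = Y2.last = P.last
      exact habd ((h3.trans hY2last).symm.trans h1)
  · exact ⟨v :: P ++ v :: Q, ⟨by simp, hnd1, hmem1⟩,
      EulerAux.not_appears_of _ _ _ _ hbad⟩
end

section
/- Let G be a directed Eulerian graph without parallel edges or self-loops, and let v be a node with d(v) = 2 that is a cut node of U(G). Then U(G) \ v has exactly two connected components K1 and K2, and v has exactly one in-neighbor and exactly one out-neighbor in each of K1 and K2. -/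
private lemma sum_zip_sub {V : Type*} (f : V → ℤ) :
    ∀ l l' : List V, l.length = l'.length →
      ((l.zip l').map (fun p => f p.2 - f p.1)).sum = (l'.map f).sum - (l.map f).sum := by
  intro l
  induction l with
  | nil =>
    intro l' h
    have : l' = [] := List.length_eq_zero_iff.mp h.symm
    simp [this]
  | cons a l ih =>
    intro l' h
    cases l' with
    | nil => simp at h
    | cons b l' =>
      have h2 := ih l' (by simpa using h)
      simp only [List.zip_cons_cons, List.map_cons, List.sum_cons, h2]
      ring

private lemma cyclic_sum {V : Type*} (f : V → ℤ) (c : List V) :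
    ((cyclicPairs c).map (fun p => f p.2 - f p.1)).sum = 0 := by
  have h1 : ((c.zip (c.rotate 1)).map (fun p => f p.2 - f p.1)).sum
      = ((c.rotate 1).map f).sum - (c.map f).sum :=
    sum_zip_sub f c (c.rotate 1) (by simp)
  have h2 : ((c.rotate 1).map f).sum = (c.map f).sum :=
    ((c.rotate_perm 1).map f).sum_eq
  rw [h2, sub_self] at h1
  simpa [cyclicPairs] using h1

open scoped Classical in
private lemma count_sub {V : Type*} (S : Set V) (L : List (V × V)) :
    ((L.map (fun p : V × V => (if p.2 ∈ S then (1:ℤ) else 0) - (if p.1 ∈ S then (1:ℤ) else 0))).sum)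
      = (L.countP (fun p => decide (p.1 ∉ S ∧ p.2 ∈ S)) : ℤ)
        - (L.countP (fun p => decide (p.1 ∈ S ∧ p.2 ∉ S)) : ℤ) := by
  induction L with
  | nil => simp
  | cons p L ih =>
    by_cases h1 : p.1 ∈ S <;> by_cases h2 : p.2 ∈ S <;>
      simp [List.countP_cons, h1, h2, ih] <;> push_cast <;> ring

open scoped Classical in
private lemma countP_cross_eq {V : Type*} (S : Set V) (c : List V) :
    (cyclicPairs c).countP (fun p => decide (p.1 ∈ S ∧ p.2 ∉ S))
      = (cyclicPairs c).countP (fun p => decide (p.1 ∉ S ∧ p.2 ∈ S)) := by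
  have h := count_sub S (cyclicPairs c)
  have h0 := cyclic_sum (fun x => if x ∈ S then (1:ℤ) else 0) c
  rw [h0] at h
  exact_mod_cast (by linarith :
    ((cyclicPairs c).countP (fun p => decide (p.1 ∈ S ∧ p.2 ∉ S)) : ℤ)
      = (cyclicPairs c).countP (fun p => decide (p.1 ∉ S ∧ p.2 ∈ S)))

private lemma ncard_mem_list {α : Type*} {L : List α} (hL : L.Nodup) (P : α → Prop)
    [DecidablePred P] :
    {x | x ∈ L ∧ P x}.ncard = L.countP (fun a => decide (P a)) := by
  classical
  have hset : {x | x ∈ L ∧ P x} = ↑(L.filter (fun a => decide (P a))).toFinset := by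
    ext x; simp [List.mem_filter]
  rw [hset, Set.ncard_coe_finset, List.toFinset_card_of_nodup (hL.filter _),
    List.countP_eq_length_filter]

private lemma crossing_ncard {V : Type*} (E : V → V → Prop) {c : List V}
    (hc : IsEulerianCircuit E c) (S : Set V) :
    {p : V × V | E p.1 p.2 ∧ p.1 ∈ S ∧ p.2 ∉ S}.ncard
      = {p : V × V | E p.1 p.2 ∧ p.1 ∉ S ∧ p.2 ∈ S}.ncard := by
  classical
  have e1 : {p : V × V | E p.1 p.2 ∧ p.1 ∈ S ∧ p.2 ∉ S}
      = {p : V × V | p ∈ cyclicPairs c ∧ (p.1 ∈ S ∧ p.2 ∉ S)} := by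
    ext p; rw [Set.mem_setOf_eq, Set.mem_setOf_eq, hc.2.2 p]
  have e2 : {p : V × V | E p.1 p.2 ∧ p.1 ∉ S ∧ p.2 ∈ S}
      = {p : V × V | p ∈ cyclicPairs c ∧ (p.1 ∉ S ∧ p.2 ∈ S)} := by
    ext p; rw [Set.mem_setOf_eq, Set.mem_setOf_eq, hc.2.2 p]
  rw [e1, e2, ncard_mem_list hc.2.1, ncard_mem_list hc.2.1]
  exact countP_cross_eq S c

private lemma walk_aux' {V : Type*} (E : V → V → Prop) (v : V) :
    ∀ {x t : V} (_ : (underlyingUG E).Walk x t) (_ : t = v) (hx : x ≠ v),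
      ∃ (y : V) (hy : y ≠ v),
        (underlyingUG E).Adj y v ∧
          (delNode E v).Reachable ⟨x, hx⟩ ⟨y, hy⟩ := by
  intro x t w
  induction w with
  | nil => intro ht hx; exact absurd ht.symm (Ne.symm hx)
  | @cons x z t h p ih =>
    intro ht hx
    by_cases hz : z = v
    · subst ht; exact ⟨x, hx, hz ▸ h, SimpleGraph.Reachable.refl _⟩
    · obtain ⟨y, hy, hadj, hr⟩ := ih ht hz
      refine ⟨y, hy, hadj, SimpleGraph.Reachable.trans ?_ hr⟩
      apply SimpleGraph.Adj.reachable
      show ((underlyingUG E).induce {u | u ≠ v}).Adj ⟨x, hx⟩ ⟨z, hz⟩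
      simpa using h

private lemma walk_aux {V : Type*} (E : V → V → Prop) (v : V)
    {x : V} (w : (underlyingUG E).Walk x v) (hx : x ≠ v) :
      ∃ (y : V) (hy : y ≠ v),
        (underlyingUG E).Adj y v ∧
          (delNode E v).Reachable ⟨x, hx⟩ ⟨y, hy⟩ :=
  walk_aux' E v w rfl hx

private lemma exists_nbr {V : Type*} (E : V → V → Prop)
    (hconn : (underlyingUG E).Connected) (v : V)
    (K : (delNode E v).ConnectedComponent) :
    ∃ y, (∃ hy : y ≠ v, (delNode E v).connectedComponentMk ⟨y, hy⟩ = K) ∧ (E y v ∨ E v y) := by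
  obtain ⟨x, hx⟩ := K.exists_rep
  obtain ⟨w⟩ := hconn.preconnected x.1 v
  obtain ⟨y, hy, hadj, hr⟩ := walk_aux E v w x.2
  refine ⟨y, ⟨hy, ?_⟩, (show y ≠ v ∧ (E y v ∨ E v y) from hadj).2⟩
  rw [← hx]
  have : (⟨x.1, x.2⟩ : {u | u ≠ v}) = x := rfl
  rw [← this]
  exact (SimpleGraph.ConnectedComponent.sound hr.symm)

private lemma comp_in_out {V : Type*} (E : V → V → Prop) {c : List V}
    (hc : IsEulerianCircuit E c) (v : V) (K : (delNode E v).ConnectedComponent) :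
    {u | E u v ∧ ∃ h : u ≠ v, (delNode E v).connectedComponentMk ⟨u, h⟩ = K}.ncard
      = {w | E v w ∧ ∃ h : w ≠ v, (delNode E v).connectedComponentMk ⟨w, h⟩ = K}.ncard := by
  classical
  set S : Set V := {x | ∃ h : x ≠ v, (delNode E v).connectedComponentMk ⟨x, h⟩ = K} with hS
  have hvS : v ∉ S := by rintro ⟨h, -⟩; exact h rfl
  -- edges within V \ {v} stay in the same component
  have hstep : ∀ a b : V, E a b → a ≠ v → b ≠ v → (a ∈ S ↔ b ∈ S) := by
    intro a b hE ha hb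
    rcases eq_or_ne a b with rfl | hne
    · exact Iff.rfl
    · have hadj : (delNode E v).Adj ⟨a, ha⟩ ⟨b, hb⟩ := by
        show ((underlyingUG E).induce {u | u ≠ v}).Adj ⟨a, ha⟩ ⟨b, hb⟩
        simp [underlyingUG, hne]
        exact Or.inl hE
      have hmk : (delNode E v).connectedComponentMk ⟨a, ha⟩
          = (delNode E v).connectedComponentMk ⟨b, hb⟩ :=
        SimpleGraph.ConnectedComponent.sound hadj.reachable
      constructor
      · rintro ⟨h, hk⟩; exact ⟨hb, by rw [← hmk]; exact hk⟩
      · rintro ⟨h, hk⟩; exact ⟨ha, by rw [hmk]; exact hk⟩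
  have e1 : {p : V × V | E p.1 p.2 ∧ p.1 ∈ S ∧ p.2 ∉ S}
      = (fun u => (u, v)) '' {u | E u v ∧ u ∈ S} := by
    ext p
    constructor
    · rintro ⟨hE, h1, h2⟩
      have ha : p.1 ≠ v := fun h => hvS (h ▸ h1)
      have hbv : p.2 = v := by
        by_contra hb
        exact h2 ((hstep p.1 p.2 hE ha hb).mp h1)
      exact ⟨p.1, ⟨hbv ▸ hE, h1⟩, by rw [← hbv]⟩
    · rintro ⟨u, ⟨hE, hu⟩, rfl⟩
      exact ⟨hE, hu, hvS⟩
  have e2 : {p : V × V | E p.1 p.2 ∧ p.1 ∉ S ∧ p.2 ∈ S}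
      = (fun w => (v, w)) '' {w | E v w ∧ w ∈ S} := by
    ext p
    constructor
    · rintro ⟨hE, h1, h2⟩
      have hb : p.2 ≠ v := fun h => hvS (h ▸ h2)
      have hav : p.1 = v := by
        by_contra ha
        exact h1 ((hstep p.1 p.2 hE ha hb).mpr h2)
      exact ⟨p.2, ⟨hav ▸ hE, h2⟩, by rw [← hav]⟩
    · rintro ⟨w, ⟨hE, hw⟩, rfl⟩
      exact ⟨hE, hvS, hw⟩
  have inj1 : Function.Injective (fun u : V => (u, v)) := fun a b h => (Prod.mk.injEq _ _ _ _).mp h |>.1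
  have inj2 : Function.Injective (fun w : V => (v, w)) := fun a b h => (Prod.mk.injEq _ _ _ _).mp h |>.2
  have := crossing_ncard E hc S
  rw [e1, e2, Set.ncard_image_of_injective _ inj1, Set.ncard_image_of_injective _ inj2] at this
  exact this

/-- If `d(v) = 2` and `v` is a cut node of `U(G)`, then `U(G) \ v` has exactly two
connected components, and `v` has exactly one in-neighbor and exactly one
out-neighbor in each of them. -/
theorem cut_degree_two_components {V : Type*} [Fintype V] (E : V → V → Prop)
    (hloop : ∀ x : V, ¬ E x x) (hconn : (underlyingUG E).Connected)
    (heul : ∃ c : List V, IsEulerianCircuit E c)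
    (v : V) (hdout : outdeg E v = 2) (hdin : indeg E v = 2)
    (hcut : IsCutNode (underlyingUG E) v) :
    ∃ K1 K2 : (delNode E v).ConnectedComponent, K1 ≠ K2 ∧
      (∀ K : (delNode E v).ConnectedComponent, K = K1 ∨ K = K2) ∧
      (∀ K : (delNode E v).ConnectedComponent,
        (∃! u : V, ∃ h : u ≠ v, E u v ∧ (delNode E v).connectedComponentMk ⟨u, h⟩ = K) ∧
        (∃! w : V, ∃ h : w ≠ v, E v w ∧ (delNode E v).connectedComponentMk ⟨w, h⟩ = K)) := by
  classical
  obtain ⟨c, hc⟩ := heul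
  -- name the in/out neighbor sets per component
  set mkc : ∀ u : V, u ≠ v → (delNode E v).ConnectedComponent :=
    fun u h => (delNode E v).connectedComponentMk ⟨u, h⟩ with hmkc
  -- both in-set and out-set of each component are nonempty
  have hio : ∀ K : (delNode E v).ConnectedComponent,
      {u | E u v ∧ ∃ h : u ≠ v, mkc u h = K}.Nonempty ∧
      {w | E v w ∧ ∃ h : w ≠ v, mkc w h = K}.Nonempty := by
    intro K
    have hcount := comp_in_out E hc v K
    have key : {u | E u v ∧ ∃ h : u ≠ v, mkc u h = K}.Nonempty ∨
        {w | E v w ∧ ∃ h : w ≠ v, mkc w h = K}.Nonempty := by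
      obtain ⟨y, hyK, hyE⟩ := exists_nbr E hconn v K
      rcases hyE with h | h
      · exact Or.inl ⟨y, h, hyK⟩
      · exact Or.inr ⟨y, h, hyK⟩
    have fin1 : {u | E u v ∧ ∃ h : u ≠ v, mkc u h = K}.Finite := Set.toFinite _
    have fin2 : {w | E v w ∧ ∃ h : w ≠ v, mkc w h = K}.Finite := Set.toFinite _
    rcases key with h | h
    · refine ⟨h, ?_⟩
      rw [← Set.ncard_pos fin2, ← hcount, Set.ncard_pos fin1]
      exact h
    · refine ⟨?_, h⟩
      rw [← Set.ncard_pos fin1, hcount, Set.ncard_pos fin2]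
      exact h
  -- the two in-neighbors
  obtain ⟨a, b, hab, hI⟩ := Set.ncard_eq_two.mp hdin
  have haE : E a v := by
    have : a ∈ ({u | E u v} : Set V) := hI.symm ▸ Set.mem_insert a {b}
    exact this
  have hbE : E b v := by
    have : b ∈ ({u | E u v} : Set V) := hI.symm ▸ Set.mem_insert_of_mem a rfl
    exact this
  have hav : a ≠ v := fun h => hloop v (h ▸ haE)
  have hbv : b ≠ v := fun h => hloop v (h ▸ hbE)
  -- the two out-neighbors
  obtain ⟨w1, w2, hw12, hO⟩ := Set.ncard_eq_two.mp hdout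
  have hw1E : E v w1 := by
    have : w1 ∈ ({w | E v w} : Set V) := hO.symm ▸ Set.mem_insert w1 {w2}
    exact this
  have hw2E : E v w2 := by
    have : w2 ∈ ({w | E v w} : Set V) := hO.symm ▸ Set.mem_insert_of_mem w1 rfl
    exact this
  have hw1v : w1 ≠ v := fun h => hloop v (h ▸ hw1E)
  have hw2v : w2 ≠ v := fun h => hloop v (h ▸ hw2E)
  set Ka := mkc a hav with hKa
  set Kb := mkc b hbv with hKb
  -- every component is Ka or Kb
  have hcover : ∀ K : (delNode E v).ConnectedComponent, K = Ka ∨ K = Kb := by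
    intro K
    obtain ⟨u, huE, hu, huK⟩ := (hio K).1
    have : u ∈ ({a, b} : Set V) := hI ▸ huE
    rcases this with rfl | rfl
    · exact Or.inl (huK ▸ rfl)
    · exact Or.inr (huK ▸ rfl)
  -- Ka ≠ Kb since v is a cut node
  have hne : Ka ≠ Kb := by
    intro hEq
    apply hcut
    have hnonempty : Nonempty ({u | u ≠ v} : Set V) := ⟨⟨a, hav⟩⟩
    refine ⟨fun x y => ?_⟩
    have hx : (delNode E v).connectedComponentMk x = Ka := by
      have := hcover ((delNode E v).connectedComponentMk x)
      rcases this with h | h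
      · exact h
      · exact h.trans hEq.symm
    have hy : (delNode E v).connectedComponentMk y = Ka := by
      have := hcover ((delNode E v).connectedComponentMk y)
      rcases this with h | h
      · exact h
      · exact h.trans hEq.symm
    exact SimpleGraph.ConnectedComponent.exact (hx.trans hy.symm)
  -- out-neighbors are in distinct components
  have houtK : ∀ K : (delNode E v).ConnectedComponent,
      mkc w1 hw1v = K ∨ mkc w2 hw2v = K := by
    intro K
    obtain ⟨w, hwE, hw, hwK⟩ := (hio K).2
    have : w ∈ ({w1, w2} : Set V) := hO ▸ hwE
    rcases this with rfl | rfl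
    · exact Or.inl (by rw [← hwK])
    · exact Or.inr (by rw [← hwK])
  have hwne : mkc w1 hw1v ≠ mkc w2 hw2v := by
    intro hEq
    rcases hcover (mkc w1 hw1v) with h | h
    · rcases houtK Kb with h2 | h2
      · exact hne (h.symm.trans h2)
      · exact hne (h.symm.trans (hEq.trans h2))
    · rcases houtK Ka with h2 | h2
      · exact hne (h2.symm.trans h)
      · exact hne ((hEq.trans h2).symm.trans h)
  -- helper for uniqueness claims
  have uniq : ∀ (P : V → Prop) (p q : V), p ≠ q → ({x | P x} : Set V) = {p, q} →
      ∀ (hp : p ≠ v) (hq : q ≠ v) (K : (delNode E v).ConnectedComponent),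
      mkc p hp = K → mkc q hq ≠ K →
      (∃! u : V, ∃ h : u ≠ v, P u ∧ mkc u h = K) := by
    intro P p q hpq hset hp hq K hpK hqK
    have hPp : P p := by
      have : p ∈ ({x | P x} : Set V) := hset.symm ▸ Set.mem_insert p {q}
      exact this
    refine ⟨p, ⟨hp, hPp, hpK⟩, ?_⟩
    rintro u ⟨h, hPu, huK⟩
    have : u ∈ ({p, q} : Set V) := hset ▸ hPu
    rcases this with rfl | rfl
    · rfl
    · exact absurd huK hqK
  refine ⟨Ka, Kb, hne, hcover, ?_⟩
  intro K
  rcases hcover K with rfl | rfl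
  · constructor
    · exact uniq (fun u => E u v) a b hab hI hav hbv Ka rfl (fun h => hne h.symm)
    · rcases houtK Ka with h | h
      · exact uniq (fun w => E v w) w1 w2 hw12 hO hw1v hw2v Ka h (fun h2 => hwne (h.trans h2.symm))
      · exact uniq (fun w => E v w) w2 w1 hw12.symm (by rw [hO, Set.pair_comm]) hw2v hw1v Ka h
          (fun h2 => hwne (h2.trans h.symm))
  · constructor
    · exact uniq (fun u => E u v) b a hab.symm (by rw [hI, Set.pair_comm]) hbv hav Kb rfl
        (fun h => hne h)
    · rcases houtK Kb with h | h
      · exact uniq (fun w => E v w) w1 w2 hw12 hO hw1v hw2v Kb h (fun h2 => hwne (h.trans h2.symm))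
      · exact uniq (fun w => E v w) w2 w1 hw12.symm (by rw [hO, Set.pair_comm]) hw2v hw1v Kb h
          (fun h2 => hwne (h2.trans h.symm))
end

section
/- Let G be a directed Eulerian graph without parallel edges or self-loops, let v be a node with d(v) = 2 that is a cut node of U(G), and let K1, K2 be the two connected components of U(G) \ v. In any Eulerian circuit of G, whenever the circuit reaches v via its in-neighbor lying in K_t (t ∈ {1,2}), the circuit must leave v via its out-neighbor lying in K_{3−t}. -/
section Aux
section Aux
variable {α : Type*}

/-- consecutive pairs of a list -/
def zt (l : List α) : List (α × α) := l.zip l.tail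

lemma zt_nil : zt ([] : List α) = [] := rfl
lemma zt_single (a : α) : zt [a] = [] := rfl
lemma zt_cons_cons (a b : α) (l : List α) : zt (a :: b :: l) = (a, b) :: zt (b :: l) := rfl

lemma zt_cons (a : α) (l : List α) (h : l ≠ []) :
    zt (a :: l) = (a, l.head h) :: zt l := by
  cases l with
  | nil => exact absurd rfl h
  | cons b t => rfl

lemma zt_append (l1 l2 : List α) (h1 : l1 ≠ []) (h2 : l2 ≠ []) :
    zt (l1 ++ l2) = zt l1 ++ (l1.getLast h1, l2.head h2) :: zt l2 := by
  induction l1 with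
  | nil => exact absurd rfl h1
  | cons a t ih =>
    cases t with
    | nil =>
      cases l2 with
      | nil => exact absurd rfl h2
      | cons b t2 => rfl
    | cons b t' =>
      have : (a :: b :: t') ++ l2 = a :: ((b :: t') ++ l2) := rfl
      rw [this, zt_cons _ _ (by simp), ih (by simp)]
      simp [zt_cons_cons, List.getLast_cons_cons]

lemma cyclicPairs_cons (a : α) (t : List α) :
    cyclicPairs (a :: t) = (a :: t).zip (t ++ [a]) := by
  unfold cyclicPairs
  rw [List.rotate_cons_succ, List.rotate_zero]

lemma cyclicPairs_eq_zt (a : α) (t : List α) :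
    cyclicPairs (a :: t) = zt ((a :: t) ++ [a]) := by
  rw [cyclicPairs_cons]
  unfold zt
  have htail : ((a :: t) ++ [a]).tail = (t ++ [a]) ++ [] := by simp
  rw [htail]
  rw [List.zip_append (by simp)]
  simp

lemma zip_rotate (l r : List α) (h : l.length = r.length) (k : ℕ) :
    (l.zip r).rotate k = (l.rotate k).zip (r.rotate k) := by
  apply List.ext_getElem
  · simp [h]
  · intro i h1 h2
    simp only [List.getElem_rotate, List.getElem_zip, List.length_zip, h, Nat.min_self,
      List.length_rotate]

lemma cyclicPairs_rotate_s6 (c : List α) (k : ℕ) :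
    cyclicPairs (c.rotate k) = (cyclicPairs c).rotate k := by
  unfold cyclicPairs
  rw [zip_rotate _ _ (by simp) k]
  congr 1
  rw [List.rotate_rotate, List.rotate_rotate, Nat.add_comm]

lemma chain'_of_zt (R : α → α → Prop) : ∀ (l : List α), (∀ p ∈ zt l, R p.1 p.2) → l.Chain' R := by
  intro l
  induction l with
  | nil => intro _; exact List.isChain_nil
  | cons a t ih =>
    intro h
    cases t with
    | nil => exact List.isChain_singleton _
    | cons b t' =>
      rw [zt_cons_cons] at h
      refine List.isChain_cons_cons.mpr ⟨h (a, b) (by simp), ih ?_⟩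
      intro p hp; exact h p (by simp [hp])

lemma split_first (a : α) : ∀ (l : List α), a ∈ l → ∃ s t, l = s ++ a :: t ∧ a ∉ s := by
  intro l
  induction l with
  | nil => simp
  | cons b t ih =>
    intro h
    by_cases hb : b = a
    · exact ⟨[], t, by simp [hb], by simp⟩
    · have : a ∈ t := by
        rcases List.mem_cons.mp h with h' | h'
        · exact absurd h'.symm hb
        · exact h'
      obtain ⟨s, t', hst, hns⟩ := ih this
      exact ⟨b :: s, t', by simp [hst], by simp [hns, Ne.symm hb]⟩

end Aux

section Graph
variable {V : Type*}

lemma delNode_adj (E : V → V → Prop) (hloop : ∀ x : V, ¬ E x x) (v : V) {a b : V}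
    (ha : a ≠ v) (hb : b ≠ v) (hab : E a b) :
    (delNode E v).Adj ⟨a, ha⟩ ⟨b, hb⟩ := by
  have hne : a ≠ b := by rintro rfl; exact hloop a hab
  exact ⟨hne, Or.inl hab⟩

lemma chainComp (E : V → V → Prop) (hloop : ∀ x : V, ¬ E x x) (v : V) :
    ∀ (l : List V) (a b : V) (ha : a ≠ v) (hb : b ≠ v),
      (a :: l).Chain' E → (∀ x ∈ a :: l, x ≠ v) →
      b = (a :: l).getLast (List.cons_ne_nil a l) →
      (delNode E v).connectedComponentMk ⟨a, ha⟩ =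
        (delNode E v).connectedComponentMk ⟨b, hb⟩ := by
  intro l
  induction l with
  | nil =>
    intro a b ha hb _ _ hbe
    simp only [List.getLast_singleton] at hbe
    subst hbe
    rfl
  | cons x t ih =>
    intro a b ha hb hchain hv hbe
    have hx : x ≠ v := hv x (by simp)
    have hax : E a x := (List.isChain_cons_cons.mp hchain).1
    have h1 := SimpleGraph.ConnectedComponent.connectedComponentMk_eq_of_adj (delNode_adj E hloop v ha hx hax)
    rw [h1]
    exact ih x b hx hb (List.isChain_cons_cons.mp hchain).2 (fun y hy => hv y (by simp [hy]))
      (by rw [hbe, List.getLast_cons_cons])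

lemma reach (E : V → V → Prop) (v : V) :
    ∀ (x z : V) (_W : (underlyingUG E).Walk x z), z = v → ∀ hx : x ≠ v,
      ∃ y, ∃ hy : y ≠ v, (underlyingUG E).Adj y v ∧
        (delNode E v).connectedComponentMk ⟨x, hx⟩ =
          (delNode E v).connectedComponentMk ⟨y, hy⟩ := by
  intro x z W
  induction W with
  | nil => rintro rfl hx; exact absurd rfl hx
  | @cons a b c h p ih =>
    intro hcv hx
    by_cases hb : b = v
    · exact ⟨a, hx, hb ▸ h, rfl⟩
    · obtain ⟨y, hy, hadj, hcomp⟩ := ih hcv hb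
      have h1 := SimpleGraph.ConnectedComponent.connectedComponentMk_eq_of_adj
        (show (delNode E v).Adj ⟨a, hx⟩ ⟨b, hb⟩ from ⟨h.1, h.2⟩)
      exact ⟨y, hy, hadj, h1.trans hcomp⟩

lemma count_target (E : V → V → Prop) (v : V) [DecidableEq V] (c₀ : List V)
    (hnodup : (cyclicPairs c₀).Nodup) (hmem : ∀ p : V × V, p ∈ cyclicPairs c₀ ↔ E p.1 p.2) :
    c₀.count v = indeg E v := by
  classical
  set F := (cyclicPairs c₀).filter (fun p => p.2 = v) with hFdef
  have hF : ∀ p : V × V, p ∈ F ↔ (E p.1 v ∧ p.2 = v) := by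
    intro p
    simp only [hFdef, List.mem_filter, hmem, decide_eq_true_eq]
    constructor
    · rintro ⟨h1, h2⟩; exact ⟨h2 ▸ h1, h2⟩
    · rintro ⟨h1, h2⟩; exact ⟨h2 ▸ h1, h2⟩
  have hFnodup : F.Nodup := hnodup.filter _
  have himg : (F.toFinset : Set (V × V)) = (fun x => (x, v)) '' {x | E x v} := by
    ext p
    simp only [Finset.coe_sort_coe, List.coe_toFinset, Set.mem_setOf_eq, List.mem_toFinset,
      Set.mem_image]
    rw [hF p]
    constructor
    · rintro ⟨h1, h2⟩; exact ⟨p.1, h1, by rw [← h2]⟩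
    · rintro ⟨x, h1, h2⟩; subst h2; exact ⟨h1, rfl⟩
  have hinj : Function.Injective (fun x : V => (x, v)) := fun a b h => congrArg Prod.fst h
  have hcard : F.length = indeg E v := by
    rw [← List.toFinset_card_of_nodup hFnodup]
    rw [← Set.ncard_coe_finset, himg, Set.ncard_image_of_injective _ hinj]
    rfl
  have hsnd : (cyclicPairs c₀).map Prod.snd = c₀.rotate 1 :=
    List.map_snd_zip (by simp)
  calc c₀.count v = (c₀.rotate 1).count v := ((List.rotate_perm c₀ 1).count_eq v).symm
    _ = ((cyclicPairs c₀).map Prod.snd).count v := by rw [hsnd]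
    _ = F.length := by
        rw [List.count, List.countP_map, List.countP_eq_length_filter]
        rfl
    _ = indeg E v := hcard

end Graph

/-- If `d(v) = 2` and `v` is a cut node whose removal leaves the two components `K1, K2`,
then any Eulerian circuit entering `v` from a node of one component leaves `v` into the
other component. -/
theorem circuit_crosses_cut_node {V : Type*} [Fintype V] (E : V → V → Prop)
    (hloop : ∀ x : V, ¬ E x x) (hconn : (underlyingUG E).Connected)
    (v : V) (hdout : outdeg E v = 2) (hdin : indeg E v = 2)
    (hcut : IsCutNode (underlyingUG E) v)
    (K1 K2 : (delNode E v).ConnectedComponent) (hK : K1 ≠ K2)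
    (hall : ∀ K : (delNode E v).ConnectedComponent, K = K1 ∨ K = K2) :
    ∀ c : List V, IsEulerianCircuit E c →
      ∀ (u w : V) (hu : u ≠ v) (hw : w ≠ v), E u v → E v w → Appears [u, v, w] c →
        ((delNode E v).connectedComponentMk ⟨u, hu⟩ = K1 →
            (delNode E v).connectedComponentMk ⟨w, hw⟩ = K2) ∧
        ((delNode E v).connectedComponentMk ⟨u, hu⟩ = K2 →
            (delNode E v).connectedComponentMk ⟨w, hw⟩ = K1) := by
  classical
  intro c hc u w hu hw hEuv hEvw happ
  obtain ⟨-, hnodup, hmem⟩ := hc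
  obtain ⟨k, hinf⟩ := happ
  rw [show ([u, v, w].zip [u, v, w].tail) = [(u, v), (v, w)] from rfl] at hinf
  obtain ⟨pre, post, hM⟩ := hinf
  have key : ∃ c₀ : List V, cyclicPairs c₀ = (v, w) :: (post ++ (pre ++ [(u, v)])) ∧
      (cyclicPairs c₀).Nodup ∧ ∀ p : V × V, p ∈ cyclicPairs c₀ ↔ E p.1 p.2 := by
    refine ⟨(c.rotate k).rotate (pre.length + 1), ?_, ?_, ?_⟩
    · rw [cyclicPairs_rotate_s6, ← hM]
      rw [show pre ++ [(u, v), (v, w)] ++ post = (pre ++ [(u, v)]) ++ ((v, w) :: post) from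
        by simp]
      rw [show pre.length + 1 = (pre ++ [(u, v)]).length from by simp]
      rw [List.rotate_append_length_eq]
      simp
    · rw [cyclicPairs_rotate_s6, cyclicPairs_rotate_s6]
      exact List.nodup_rotate.mpr (List.nodup_rotate.mpr hnodup)
    · intro p
      rw [cyclicPairs_rotate_s6, cyclicPairs_rotate_s6, List.mem_rotate, List.mem_rotate]
      exact hmem p
  obtain ⟨c₀, hP, hnodup₀, hmem₀⟩ := key
  rcases c₀ with _ | ⟨a, _ | ⟨b, t'⟩⟩
  · rw [show cyclicPairs ([] : List V) = [] from rfl] at hP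
    exact absurd hP (by simp)
  · rw [show cyclicPairs [a] = [(a, a)] from by simp [cyclicPairs]] at hP
    have := congrArg List.length hP
    simp at this
  · rw [show cyclicPairs (a :: b :: t') = (a, b) :: ((b :: t').zip (t' ++ [a])) from by
      rw [cyclicPairs_cons]; rfl] at hP
    have hpair : (a, b) = (v, w) := by
      have h0 := hP
      injection h0 with h1 _
    have hav : a = v := congrArg Prod.fst hpair
    have hbw : b = w := congrArg Prod.snd hpair
    rw [hav, hbw] at hP hnodup₀ hmem₀
    have hPfull : cyclicPairs (v :: w :: t') = (v, w) :: (post ++ (pre ++ [(u, v)])) := by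
      rw [show cyclicPairs (v :: w :: t') = (v, w) :: ((w :: t').zip (t' ++ [v])) from by
        rw [cyclicPairs_cons]; rfl]
      rw [List.cons.injEq] at hP
      rw [hP.2]
    -- count occurrences of v
    have hcnt : (v :: w :: t').count v = 2 :=
      (count_target E v (v :: w :: t') hnodup₀ hmem₀).trans hdin
    have h1 : (w :: t').count v = 1 := by
      rw [List.count_cons_self] at hcnt; omega
    have hvmem : v ∈ w :: t' := by
      apply List.count_pos_iff.mp; omega
    obtain ⟨A, B, hAB, hvA⟩ := split_first v (w :: t') hvmem
    have hvB : v ∉ B := by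
      rw [hAB, List.count_append, List.count_cons_self] at h1
      have hA0 : A.count v = 0 := List.count_eq_zero.mpr hvA
      exact List.count_eq_zero.mp (by omega)
    rcases A with _ | ⟨a0, A'⟩
    · simp at hAB
      exact absurd hAB.1 hw
    rcases B with _ | ⟨b0, B'⟩
    · exfalso
      have hvv : (v, v) ∈ cyclicPairs (v :: w :: t') := by
        rw [cyclicPairs_eq_zt]
        rw [show (v :: w :: t') ++ [v] = (v :: a0 :: A') ++ [v, v] from by simp [hAB]]
        rw [zt_append (v :: a0 :: A') [v, v] (by simp) (by simp)]
        simp [zt]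
      exact hloop v ((hmem₀ _).mp hvv)
    have ha0 : w = a0 := by
      have h' := hAB
      simp only [List.cons_append, List.cons.injEq] at h'
      exact h'.1
    rw [← ha0] at hAB hvA
    have hA : (w :: A') ≠ [] := List.cons_ne_nil _ _
    have hB : (b0 :: B') ≠ [] := List.cons_ne_nil _ _
    obtain ⟨u₁, hu₁⟩ : ∃ x, (w :: A').getLast hA = x := ⟨_, rfl⟩
    obtain ⟨uB, huB⟩ : ∃ x, (b0 :: B').getLast hB = x := ⟨_, rfl⟩
    have hfull : cyclicPairs (v :: w :: t') =
        (v, w) :: (zt (w :: A') ++ (u₁, v) :: (v, b0) :: (zt (b0 :: B') ++ [(uB, v)])) := by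
      rw [cyclicPairs_eq_zt]
      rw [show (v :: w :: t') ++ [v] =
        v :: ((w :: A') ++ (v :: ((b0 :: B') ++ [v]))) from by simp [hAB]]
      rw [zt_cons v _ (by simp), zt_append (w :: A') _ hA (by simp),
        zt_cons v _ (by simp), zt_append (b0 :: B') [v] hB (by simp)]
      simp [zt_single, hu₁, huB]
    have hu₁v : u₁ ≠ v := by
      intro h; apply hvA; rw [← h, ← hu₁]; exact List.getLast_mem hA
    have hb0v : b0 ≠ v := fun h => hvB (by simp [h])
    have hEu1 : E u₁ v := (hmem₀ ((u₁, v) : V × V)).mp (by rw [hfull]; simp)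
    have hEw2 : E v b0 := (hmem₀ ((v, b0) : V × V)).mp (by rw [hfull]; simp)
    have huBu : uB = u := by
      have h5 : (cyclicPairs (v :: w :: t')).getLast? = some (u, v) := by
        rw [hPfull, show (v, w) :: (post ++ (pre ++ [(u, v)])) =
          (((v, w) :: (post ++ pre)) ++ [(u, v)]) from by simp]
        exact List.getLast?_concat
      rw [hfull, show (v, w) :: (zt (w :: A') ++ (u₁, v) :: (v, b0) ::
          (zt (b0 :: B') ++ [(uB, v)])) =
        (((v, w) :: (zt (w :: A') ++ (u₁, v) :: (v, b0) :: zt (b0 :: B'))) ++ [(uB, v)]) from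
          by simp] at h5
      rw [List.getLast?_concat] at h5
      have := Option.some.inj h5
      exact congrArg Prod.fst this
    have hnd := hnodup₀
    rw [hfull] at hnd
    have hww2 : w ≠ b0 := by
      intro hEq
      apply (List.nodup_cons.mp hnd).1
      rw [hEq]
      simp
    have huu1 : u ≠ u₁ := by
      intro hEq
      have h2 := (List.nodup_cons.mp hnd).2
      have h3 := h2.of_append_right
      apply (List.nodup_cons.mp h3).1
      rw [← hEq, ← huBu]
      simp
    have hSin : ({u, u₁} : Set V) = {x | E x v} := by
      refine Set.eq_of_subset_of_ncard_le ?_ ?_ (Set.toFinite _)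
      · intro x hx
        simp only [Set.mem_insert_iff, Set.mem_singleton_iff] at hx
        rcases hx with rfl | rfl
        · exact hEuv
        · exact hEu1
      · rw [Set.ncard_pair huu1]
        exact le_of_eq hdin
    have hSout : ({w, b0} : Set V) = {x | E v x} := by
      refine Set.eq_of_subset_of_ncard_le ?_ ?_ (Set.toFinite _)
      · intro x hx
        simp only [Set.mem_insert_iff, Set.mem_singleton_iff] at hx
        rcases hx with rfl | rfl
        · exact hEvw
        · exact hEw2
      · rw [Set.ncard_pair hww2]
        exact le_of_eq hdout
    have hchA : (w :: A').Chain' E := by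
      apply chain'_of_zt
      intro p hp
      exact (hmem₀ p).mp (by rw [hfull]; simp only [List.mem_cons, List.mem_append]; tauto)
    have hchB : (b0 :: B').Chain' E := by
      apply chain'_of_zt
      intro p hp
      exact (hmem₀ p).mp (by rw [hfull]; simp only [List.mem_cons, List.mem_append]; tauto)
    have hAne : ∀ x ∈ w :: A', x ≠ v := fun x hx h => hvA (h ▸ hx)
    have hBne : ∀ x ∈ b0 :: B', x ≠ v := fun x hx h => hvB (h ▸ hx)
    have compA : (delNode E v).connectedComponentMk ⟨w, hw⟩ =
        (delNode E v).connectedComponentMk ⟨u₁, hu₁v⟩ :=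
      chainComp E hloop v A' w u₁ hw hu₁v hchA hAne hu₁.symm
    have compB : (delNode E v).connectedComponentMk ⟨b0, hb0v⟩ =
        (delNode E v).connectedComponentMk ⟨u, hu⟩ :=
      chainComp E hloop v B' b0 u hb0v hu hchB hBne (huB.trans huBu).symm
    have hne : (delNode E v).connectedComponentMk ⟨u, hu⟩ ≠
        (delNode E v).connectedComponentMk ⟨w, hw⟩ := by
      intro heq
      have hnbr : ∀ (y : V) (hy : y ≠ v), (underlyingUG E).Adj y v →
          (delNode E v).connectedComponentMk ⟨y, hy⟩ =
            (delNode E v).connectedComponentMk ⟨u, hu⟩ := by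
        intro y hy hadj
        rcases hadj.2 with hE | hE
        · have hx : y ∈ ({u, u₁} : Set V) := by rw [hSin]; exact hE
          simp only [Set.mem_insert_iff, Set.mem_singleton_iff] at hx
          rcases hx with rfl | rfl
          · rfl
          · exact compA.symm.trans heq.symm
        · have hx : y ∈ ({w, b0} : Set V) := by rw [hSout]; exact hE
          simp only [Set.mem_insert_iff, Set.mem_singleton_iff] at hx
          rcases hx with rfl | rfl
          · exact heq.symm
          · exact compB
      obtain ⟨K', hK'⟩ : ∃ K' : (delNode E v).ConnectedComponent,
          K' ≠ (delNode E v).connectedComponentMk ⟨u, hu⟩ := by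
        rcases hall ((delNode E v).connectedComponentMk ⟨u, hu⟩) with h | h
        · exact ⟨K2, by rw [h]; exact hK.symm⟩
        · exact ⟨K1, by rw [h]; exact hK⟩
      obtain ⟨x, hxmk⟩ := K'.exists_rep
      have hxv : (x : V) ≠ v := x.2
      obtain ⟨W⟩ := hconn.preconnected x.1 v
      obtain ⟨y, hy, hadj, hcomp⟩ := reach E v x.1 v W rfl hxv
      exact hK' (by rw [← hxmk]; exact hcomp.trans (hnbr y hy hadj))
    constructor
    · intro h
      rcases hall ((delNode E v).connectedComponentMk ⟨w, hw⟩) with h2 | h2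
      · exact absurd (h.trans h2.symm) hne
      · exact h2
    · intro h
      rcases hall ((delNode E v).connectedComponentMk ⟨w, hw⟩) with h2 | h2
      · exact h2
      · exact absurd (h.trans h2.symm) hne
end Aux
end

section
/- Let G = (V,E) be a directed Eulerian graph without parallel edges or self-loops, and define A(G) = { v ∈ V : d(v) = 1, or (d(v) = 2 and v is a cut node of U(G)) }. Then G has a unique Eulerian circuit (up to cyclic rotation) if and only if A(G) = V. -/
/-- `v ∈ A(G)`: `d(v) = 1`, or `d(v) = 2` and `v` is a cut node of `U(G)`. -/
def inA {V : Type*} (E : V → V → Prop) (v : V) : Prop :=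
  outdeg E v = 1 ∨ (outdeg E v = 2 ∧ IsCutNode (underlyingUG E) v)

namespace EulerUnique
variable {V : Type*}

/-- linear pairs of a list -/
def LP (l : List V) : List (V × V) := l.zip l.tail

@[simp] lemma LP_nil : LP ([] : List V) = [] := rfl
@[simp] lemma LP_single (a : V) : LP [a] = [] := rfl
@[simp] lemma LP_cons2 (a b : V) (l : List V) : LP (a :: b :: l) = (a, b) :: LP (b :: l) := rfl

lemma zip_trunc (l₁ l₂ : List V) (z : V) (h : l₁.length = l₂.length) :
    (l₁ ++ [z]).zip l₂ = l₁.zip l₂ := by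
  induction l₁ generalizing l₂ with
  | nil => cases l₂ with
    | nil => rfl
    | cons b t => simp at h
  | cons a t ih => cases l₂ with
    | nil => simp at h
    | cons b t2 => simp only [List.cons_append, List.zip_cons_cons, List.cons.injEq, true_and]
                   exact ih t2 (by simpa using h)

lemma cp_cons (a : V) (l : List V) : cyclicPairs (a :: l) = LP (a :: l ++ [a]) := by
  have h1 : (a :: l).rotate 1 = l ++ [a] := by
    simp [List.rotate_eq_drop_append_take (by simp : 1 ≤ (a::l).length)]
  unfold cyclicPairs LP
  rw [h1]
  rw [show a :: l ++ [a] = (a :: l) ++ [a] from rfl]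
  rw [show ((a :: l) ++ [a]).tail = l ++ [a] from rfl]
  rw [zip_trunc _ _ _ (by simp)]

lemma LP_split (l₁ l₂ : List V) (x : V) :
    LP (l₁ ++ x :: l₂) = LP (l₁ ++ [x]) ++ LP (x :: l₂) := by
  induction l₁ with
  | nil => simp
  | cons a t ih =>
    cases t with
    | nil => simp
    | cons b t2 => simpa using ih

lemma LP_concat (l : List V) (h : l ≠ []) (b : V) :
    LP (l ++ [b]) = LP l ++ [(l.getLast h, b)] := by
  induction l with
  | nil => simp at h
  | cons a t ih =>
    cases t with
    | nil => simp
    | cons c t2 =>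
      rw [List.cons_append, List.cons_append]
      rw [show LP (a :: c :: (t2 ++ [b])) = (a,c) :: LP (c :: t2 ++ [b]) from rfl]
      rw [ih (by simp)]
      simp [List.getLast]

lemma LP_cons_head (a : V) (l : List V) (h : l ≠ []) :
    LP (a :: l) = (a, l.head h) :: LP l := by
  cases l with
  | nil => simp at h
  | cons b t => rfl

lemma mem_LP {p : V × V} {l : List V} (h : p ∈ LP l) : p.1 ∈ l ∧ p.2 ∈ l := by
  obtain ⟨h1, h2⟩ := List.of_mem_zip (show (p.1, p.2) ∈ l.zip l.tail from h)
  exact ⟨h1, List.mem_of_mem_tail h2⟩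

lemma map_fst_cp (c : List V) : (cyclicPairs c).map Prod.fst = c :=
  List.map_fst_zip (by simp)

lemma length_cp (c : List V) : (cyclicPairs c).length = c.length := by
  conv_rhs => rw [← map_fst_cp c]
  simp

lemma cp_rotate (c : List V) (k : ℕ) :
    cyclicPairs (c.rotate k) = (cyclicPairs c).rotate k := by
  unfold cyclicPairs
  rw [show (c.rotate k).rotate 1 = (c.rotate 1).rotate k by
    rw [List.rotate_rotate, List.rotate_rotate, Nat.add_comm]]
  rw [show ∀ (l₁ l₂ : List V), l₁.zip l₂ = List.zipWith Prod.mk l₁ l₂ from fun _ _ => rfl]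
  rw [← List.zipWith_rotate_distrib _ _ _ _ (by simp)]
  rfl

end EulerUnique
namespace EulerUnique
variable {V : Type*}

/-- `p` is immediately followed by `q` cyclically in `l`. -/
def CAdj (l : List V) (p q : V) : Prop := ∃ k s, l.rotate k = p :: q :: s

lemma rotate_inv (l : List V) (m : ℕ) : ∃ m', (l.rotate m).rotate m' = l := by
  rcases List.eq_nil_or_concat l with rfl | ⟨_, _, _⟩
  · exact ⟨0, by simp⟩
  · have hn : 0 < l.length := by
      rcases l with _ | _
      · simp_all
      · simp
    refine ⟨l.length - m % l.length, ?_⟩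
    rw [List.rotate_rotate, ← List.rotate_mod]
    have : (m + (l.length - m % l.length)) % l.length = 0 := by
      have h1 : m % l.length < l.length := Nat.mod_lt _ hn
      have h2 : m % l.length + (l.length - m % l.length) = l.length :=
        Nat.add_sub_cancel' h1.le
      set a := m % l.length with ha
      obtain ⟨d, hd⟩ : ∃ d, m = a + l.length * d :=
        ⟨m / l.length, (Nat.mod_add_div m l.length).symm⟩
      rw [hd, Nat.add_right_comm, h2, Nat.add_mul_mod_self_left, Nat.mod_self]
    rw [this]
    simp

lemma cadj_rotate {l : List V} {p q : V} (m : ℕ) : CAdj (l.rotate m) p q ↔ CAdj l p q := by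
  constructor
  · rintro ⟨k, s, hk⟩
    exact ⟨m + k, s, by rw [← List.rotate_rotate]; exact hk⟩
  · rintro ⟨k, s, hk⟩
    obtain ⟨m', hm'⟩ := rotate_inv l m
    exact ⟨m' + k, s, by rw [← List.rotate_rotate, hm', hk]⟩

lemma rotate_eq_self_of_head_eq {l : List V} (hnd : l.Nodup) (m : ℕ) {a : V} {t t' : List V}
    (h1 : l = a :: t) (h2 : l.rotate m = a :: t') : l.rotate m = l := by
  have hn : 0 < l.length := by rw [h1]; simp
  have hlen : (l.rotate m).length = l.length := by simp
  have hget : (l.rotate m).get ⟨0, by omega⟩ = l.get ⟨(0 + m) % l.length, by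
      exact Nat.mod_lt _ hn⟩ := List.get_rotate l m ⟨0, by omega⟩
  have hh1 : (l.rotate m).get ⟨0, by omega⟩ = a := by simp [h2]
  have hh2 : l.get ⟨0, hn⟩ = a := by simp [h1]
  have : ((0 + m) % l.length : ℕ) = 0 := by
    have := List.Nodup.get_inj_iff hnd (i := ⟨(0 + m) % l.length, Nat.mod_lt _ hn⟩)
      (j := ⟨0, hn⟩)
    have heq : l.get ⟨(0 + m) % l.length, Nat.mod_lt _ hn⟩ = l.get ⟨0, hn⟩ := by
      rw [← hget, hh1, hh2]
    have h3 := this.mp heq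
    simpa using Fin.val_eq_of_eq h3
  have h0 : m % l.length = 0 := by simpa using this
  rw [← List.rotate_mod, h0]
  simp

lemma cadj_unique {l : List V} {p q q' : V} (hnd : l.Nodup)
    (h1 : CAdj l p q) (h2 : CAdj l p q') : q = q' := by
  obtain ⟨k, s, hk⟩ := h1
  obtain ⟨k', s', hk'⟩ := h2
  set X := l.rotate k with hX
  have hXnd : X.Nodup := (List.rotate_perm l k).nodup_iff.mpr hnd
  obtain ⟨m₀, hm₀⟩ := rotate_inv l k
  have hY : X.rotate (m₀ + k') = l.rotate k' := by
    rw [← List.rotate_rotate, hm₀]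
  have := rotate_eq_self_of_head_eq hXnd (m₀ + k') hk (by rw [hY, hk'])
  rw [hY, hk'] at this
  rw [hk] at this
  have h4 : q' :: s' = q :: s := (List.cons.injEq _ _ _ _ ▸ this).2
  exact ((List.cons.injEq _ _ _ _ ▸ h4).1).symm

lemma cadj_intro_mid (A B : List V) (p q : V) : CAdj (A ++ p :: q :: B) p q := by
  refine ⟨A.length, B ++ A, ?_⟩
  rw [List.rotate_eq_drop_append_take (by simp)]
  rw [List.drop_left, List.take_left]
  simp

lemma cadj_intro_wrap (M : List V) (p q : V) : CAdj (q :: M ++ [p]) p q := by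
  refine ⟨(q :: M).length, M, ?_⟩
  rw [show q :: M ++ [p] = (q :: M) ++ [p] from rfl]
  rw [List.rotate_eq_drop_append_take (by simp)]
  rw [List.drop_left, List.take_left]
  rfl

lemma split_first {x : V} {l : List V} (h : x ∈ l) :
    ∃ s t, l = s ++ x :: t ∧ x ∉ s := by
  induction l with
  | nil => simp at h
  | cons a u ih =>
    by_cases hax : a = x
    · exact ⟨[], u, by rw [hax]; rfl, by simp⟩
    · rcases ih (by
        rcases List.mem_cons.mp h with h' | h'
        · exact absurd h'.symm hax
        · exact h') with ⟨s, t, rfl, hns⟩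
      exact ⟨a :: s, t, rfl, by
        simp only [List.mem_cons, not_or]
        exact ⟨fun hh => hax hh.symm, hns⟩⟩

end EulerUnique
namespace EulerUnique
variable {V : Type*} {E : V → V → Prop}

/-- chunk: pairs of the path a A b -/
def Kc (a : V) (A : List V) (b : V) : List (V × V) := LP (a :: (A ++ [b]))

lemma LP_map_fst (l : List V) : (LP l).map Prod.fst = l.dropLast := by
  induction l with
  | nil => rfl
  | cons a t ih =>
    cases t with
    | nil => rfl
    | cons b t2 => simp only [LP_cons2, List.map_cons, ih]; rfl

lemma LP_map_snd (l : List V) : (LP l).map Prod.snd = l.tail :=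
  List.map_snd_zip (by cases l <;> simp)

lemma LP_fst_mem {p : V × V} {l : List V} (h : p ∈ LP l) : p.1 ∈ l.dropLast := by
  rw [← LP_map_fst]; exact List.mem_map_of_mem h

lemma LP_snd_mem {p : V × V} {l : List V} (h : p ∈ LP l) : p.2 ∈ l.tail := by
  rw [← LP_map_snd]; exact List.mem_map_of_mem h

lemma Kc_fst_mem {p : V × V} {a b : V} {A : List V} (h : p ∈ Kc a A b) : p.1 ∈ a :: A := by
  have := LP_fst_mem h
  rwa [show a :: (A ++ [b]) = (a :: A) ++ [b] from rfl, List.dropLast_concat] at this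

lemma Kc_snd_mem {p : V × V} {a b : V} {A : List V} (h : p ∈ Kc a A b) : p.2 ∈ A ++ [b] :=
  LP_snd_mem h

lemma Kc_eq_cons (a : V) (A : List V) (b : V) :
    Kc a A b = (a, (A ++ [b]).head (by simp)) :: LP (A ++ [b]) :=
  LP_cons_head _ _ _

lemma Kc_eq_concat (a : V) (A : List V) (b : V) :
    Kc a A b = LP (a :: A) ++ [((a :: A).getLast (by simp), b)] := by
  unfold Kc
  rw [show a :: (A ++ [b]) = (a :: A) ++ [b] from rfl, LP_concat _ (by simp) _]

lemma Kc_fst_eq {p : V × V} {a b : V} {A : List V} (h : p ∈ Kc a A b) (hp : p.1 = a)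
    (hna : a ∉ A) : p = (a, (A ++ [b]).head (by simp)) := by
  rw [Kc_eq_cons] at h
  rcases List.mem_cons.mp h with h | h
  · exact h
  · exfalso
    have := LP_fst_mem h
    rw [List.dropLast_concat] at this
    exact hna (hp ▸ this)

lemma Kc_snd_eq {p : V × V} {a b : V} {A : List V} (h : p ∈ Kc a A b) (hp : p.2 = b)
    (hnb : b ∉ A) : p = ((a :: A).getLast (by simp), b) := by
  rw [Kc_eq_concat] at h
  rcases List.mem_append.mp h with h | h
  · exfalso
    have := LP_snd_mem h
    rw [show (a :: A).tail = A from rfl] at this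
    exact hnb (hp ▸ this)
  · simpa using h

@[simp] lemma Kc_nil (a b : V) : Kc a [] b = [(a, b)] := rfl

/-- rotating preserves Eulerian circuits -/
lemma euler_rotate {c : List V} (hc : IsEulerianCircuit E c) (k : ℕ) :
    IsEulerianCircuit E (c.rotate k) := by
  obtain ⟨h1, h2, h3⟩ := hc
  refine ⟨by simpa using h1, ?_, ?_⟩
  · rw [cp_rotate]
    exact ((List.rotate_perm _ _).nodup_iff).mpr h2
  · intro p
    rw [cp_rotate, List.mem_rotate]
    exact h3 p

lemma mem_cp_mem {c : List V} {p : V × V} (h : p ∈ cyclicPairs c) : p.1 ∈ c ∧ p.2 ∈ c := by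
  obtain ⟨h1, h2⟩ := List.of_mem_zip (show (p.1, p.2) ∈ c.zip (c.rotate 1) from h)
  exact ⟨h1, (List.mem_rotate).mp h2⟩

lemma cp_ne_nil {c : List V} (h : c ≠ []) : cyclicPairs c ≠ [] := by
  intro hcp
  apply h
  have := length_cp c
  rw [hcp] at this
  exact List.eq_nil_of_length_eq_zero this.symm

lemma length_eq_ncard [DecidableEq V] {M : List V} (h : M.Nodup) {s : Set V}
    (hm : ∀ a, a ∈ M ↔ a ∈ s) : M.length = s.ncard := by
  have h1 : s = ↑M.toFinset := by
    ext a
    simp [← hm a]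
  rw [h1, Set.ncard_coe_finset, List.toFinset_card_of_nodup h]

lemma length_eq_ncard' [DecidableEq V] {M : List (V × V)} (h : M.Nodup) {s : Set (V × V)}
    (hm : ∀ a, a ∈ M ↔ a ∈ s) : M.length = s.ncard := by
  have h1 : s = ↑M.toFinset := by
    ext a
    simp [← hm a]
  rw [h1, Set.ncard_coe_finset, List.toFinset_card_of_nodup h]

lemma count_eq_outdeg [DecidableEq V] {c : List V} (hc : IsEulerianCircuit E c) (x : V) :
    c.count x = outdeg E x := by
  classical
  obtain ⟨h1, h2, h3⟩ := hc
  have hmap : c.count x = ((cyclicPairs c).map Prod.fst).count x := by rw [map_fst_cp]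
  rw [hmap, List.count_eq_countP, List.countP_map]
  set L := (cyclicPairs c).filter (fun p => decide (p.1 = x)) with hL
  have hcount : ((cyclicPairs c).countP ((fun a => a == x) ∘ Prod.fst)) = L.length := by
    rw [hL, List.countP_eq_length_filter]
    congr 1
  rw [hcount]
  have hLnd : L.Nodup := h2.filter _
  have hMnd : (L.map Prod.snd).Nodup := by
    refine List.Nodup.map_on ?_ hLnd
    intro p hp q hq hpq
    have hp1 : p.1 = x := by simpa using (List.of_mem_filter hp)
    have hq1 : q.1 = x := by simpa using (List.of_mem_filter hq)
    exact Prod.ext (hp1.trans hq1.symm) hpq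
  have hlen : L.length = (L.map Prod.snd).length := by simp
  rw [hlen]
  apply length_eq_ncard hMnd
  intro w
  simp only [List.mem_map, Set.mem_setOf_eq]
  constructor
  · rintro ⟨p, hp, rfl⟩
    have hp1 : p.1 = x := by simpa using (List.of_mem_filter hp)
    have := (h3 p).mp (List.mem_of_mem_filter hp)
    rwa [hp1] at this
  · intro hw
    refine ⟨(x, w), ?_, rfl⟩
    rw [List.mem_filter]
    exact ⟨(h3 (x, w)).mpr hw, by simp⟩

lemma exists_rotate_head {c : List V} {x : V} (hx : x ∈ c) :
    ∃ k t, c.rotate k = x :: t := by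
  obtain ⟨s, t, rfl, _⟩ := split_first hx
  refine ⟨s.length, t ++ s, ?_⟩
  rw [List.rotate_eq_drop_append_take (by simp)]
  rw [List.drop_left, List.take_left]
  rfl

end EulerUnique
namespace EulerUnique
variable {V : Type*} {E : V → V → Prop}

lemma del_adj {x : V} {a b : {u | u ≠ x}} :
    (delNode E x).Adj a b ↔ (underlyingUG E).Adj a.val b.val := by
  simp [delNode]

lemma exists_adj (hconn : (underlyingUG E).Connected) {z w : V} (hzw : z ≠ w) :
    ∃ b, (underlyingUG E).Adj z b := by
  obtain ⟨p⟩ := hconn.preconnected z w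
  cases p with
  | nil => exact absurd rfl hzw
  | cons h _ => exact ⟨_, h⟩

lemma every_mem (hloop : ∀ x : V, ¬ E x x) (hconn : (underlyingUG E).Connected)
    {c : List V} (hc : IsEulerianCircuit E c) (z : V) : z ∈ c := by
  have hcpne := cp_ne_nil hc.1
  set p0 := (cyclicPairs c).head hcpne with hp0
  have hp0mem : p0 ∈ cyclicPairs c := List.head_mem hcpne
  have hE0 : E p0.1 p0.2 := (hc.2.2 p0).mp hp0mem
  have hne : p0.1 ≠ p0.2 := fun h => hloop p0.1 (by rw [h] at hE0 ⊢; exact hE0)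
  have : ∃ w, w ≠ z := by
    by_cases h : p0.1 = z
    · exact ⟨p0.2, fun hh => hne (hh.symm ▸ h : p0.1 = p0.2)⟩
    · exact ⟨p0.1, h⟩
  obtain ⟨w, hwz⟩ := this
  obtain ⟨b, hadj⟩ := exists_adj hconn (Ne.symm hwz)
  rcases (show z ≠ b ∧ (E z b ∨ E b z) from hadj).2 with hE | hE
  · have := mem_cp_mem ((hc.2.2 (z, b)).mpr hE)
    exact this.1
  · have := mem_cp_mem ((hc.2.2 (b, z)).mpr hE)
    exact this.2

lemma chain_reach_head (hloop : ∀ x : V, ¬ E x x) (x : V) :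
    ∀ (L : List V) (hne : L ≠ [])
      (_ : ∀ p ∈ LP L, E p.1 p.2)
      (hnx : ∀ a ∈ L, a ≠ x) (a : V) (ha : a ∈ L),
      (delNode E x).Reachable ⟨L.head hne, hnx _ (List.head_mem hne)⟩ ⟨a, hnx a ha⟩ := by
  intro L
  induction L with
  | nil => intro hne; exact absurd rfl hne
  | cons b t ih =>
    intro hne hadj hnx a ha
    rcases List.mem_cons.mp ha with rfl | hat
    · rfl
    · have ht : t ≠ [] := List.ne_nil_of_mem hat
      have hstep : (delNode E x).Adj ⟨b, hnx _ (List.mem_cons_self)⟩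
          ⟨t.head ht, hnx _ (List.mem_cons_of_mem _ (List.head_mem ht))⟩ := by
        rw [del_adj]
        have hmem : (b, t.head ht) ∈ LP (b :: t) := by
          rw [LP_cons_head _ _ ht]
          exact List.mem_cons_self
        have hE := hadj _ hmem
        exact ⟨fun (h : b = t.head ht) => hloop b (by rw [h] at hE ⊢; exact hE), Or.inl hE⟩
      have hrest := ih ht (fun p hp => hadj p (by
          rw [LP_cons_head _ _ ht]; exact List.mem_cons_of_mem _ hp))
        (fun a' ha' => hnx a' (List.mem_cons_of_mem _ ha')) a hat
      exact (hstep.reachable).trans hrest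

lemma chain_reach (hloop : ∀ x : V, ¬ E x x) (x : V) (L : List V)
    (hadj : ∀ p ∈ LP L, E p.1 p.2) (hnx : ∀ a ∈ L, a ≠ x) {a b : V}
    (ha : a ∈ L) (hb : b ∈ L) :
    (delNode E x).Reachable ⟨a, hnx a ha⟩ ⟨b, hnx b hb⟩ := by
  have hne : L ≠ [] := List.ne_nil_of_mem ha
  exact (chain_reach_head hloop x L hne hadj hnx a ha).symm.trans
    (chain_reach_head hloop x L hne hadj hnx b hb)

end EulerUnique
namespace EulerUnique
variable {V : Type*} {E : V → V → Prop}

lemma cp_decomp2 (v : V) (S T : List V) :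
    cyclicPairs (v :: (S ++ v :: T)) = Kc v S v ++ Kc v T v := by
  rw [cp_cons]
  rw [show v :: (S ++ v :: T) ++ [v] = (v :: S) ++ v :: (T ++ [v]) by simp]
  rw [LP_split]
  rfl

lemma cp_decomp3 (v : V) (S T R : List V) :
    cyclicPairs (v :: (S ++ v :: (T ++ v :: R)))
      = Kc v S v ++ (Kc v T v ++ Kc v R v) := by
  rw [cp_cons]
  rw [show v :: (S ++ v :: (T ++ v :: R)) ++ [v]
      = (v :: S) ++ v :: (T ++ v :: (R ++ [v])) by simp]
  rw [LP_split]
  congr 1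
  rw [show v :: (T ++ v :: (R ++ [v])) = (v :: T) ++ v :: (R ++ [v]) by simp]
  rw [LP_split]
  rfl

lemma Kc_split (a x b : V) (A B : List V) :
    Kc a (A ++ x :: B) b = Kc a A x ++ Kc x B b := by
  unfold Kc
  rw [show a :: (A ++ x :: B ++ [b]) = (a :: A) ++ x :: (B ++ [b]) by simp]
  rw [LP_split]
  rfl

lemma decomp_two [DecidableEq V] {x : V} {r : List V}
    (hcount : (x :: r).count x = 2) :
    ∃ S T, x :: r = x :: (S ++ x :: T) ∧ x ∉ S ∧ x ∉ T := by
  have hr : r.count x = 1 := by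
    have : (x :: r).count x = r.count x + 1 := List.count_cons_self
    omega
  have hxr : x ∈ r := List.count_pos_iff.mp (by omega)
  obtain ⟨S, T, rfl, hS⟩ := split_first hxr
  refine ⟨S, T, rfl, hS, ?_⟩
  have h0 : S.count x = 0 := List.count_eq_zero.mpr hS
  have : (S ++ x :: T).count x = S.count x + (T.count x + 1) := by
    rw [List.count_append, List.count_cons_self]
  intro hxT
  have := List.count_pos_iff.mpr hxT
  omega

lemma decomp_three [DecidableEq V] {x : V} {r : List V}
    (hcount : 3 ≤ (x :: r).count x) :
    ∃ S T R, x :: r = x :: (S ++ x :: (T ++ x :: R)) ∧ x ∉ S ∧ x ∉ T := by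
  have hr : 2 ≤ r.count x := by
    have : (x :: r).count x = r.count x + 1 := List.count_cons_self
    omega
  have hxr : x ∈ r := List.count_pos_iff.mp (by omega)
  obtain ⟨S, r2, rfl, hS⟩ := split_first hxr
  have h0 : S.count x = 0 := List.count_eq_zero.mpr hS
  have hr2 : 1 ≤ r2.count x := by
    have : (S ++ x :: r2).count x = S.count x + (r2.count x + 1) := by
      rw [List.count_append, List.count_cons_self]
    omega
  have hxr2 : x ∈ r2 := List.count_pos_iff.mp (by omega)
  obtain ⟨T, R, rfl, hT⟩ := split_first hxr2
  exact ⟨S, T, R, rfl, hS, hT⟩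

end EulerUnique
namespace EulerUnique
variable {V : Type*} {E : V → V → Prop}

lemma cadj_mem {α : Type*} {l : List α} {p q : α} (h : CAdj l p q) : p ∈ l ∧ q ∈ l := by
  obtain ⟨k, s, hk⟩ := h
  constructor
  · exact List.mem_rotate.mp (by rw [hk]; simp)
  · exact List.mem_rotate.mp (by rw [hk]; simp)

lemma head_append_left {l : List V} (h : l ≠ []) (l' : List V) :
    (l ++ l').head (by simp [h]) = l.head h := by
  cases l with
  | nil => exact absurd rfl h
  | cons a t => rfl

lemma cut_step [Fintype V] (hloop : ∀ x : V, ¬ E x x) (hconn : (underlyingUG E).Connected)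
    {c : List V} (hc : IsEulerianCircuit E c) {u x y : V}
    (hd : outdeg E x = 2) (hcut : IsCutNode (underlyingUG E) x)
    (hadj : CAdj (cyclicPairs c) (u, x) (x, y)) (hux : u ≠ x) (hyx : y ≠ x) :
    ¬ (delNode E x).Reachable ⟨u, hux⟩ ⟨y, hyx⟩ ∧
      ∀ z (_ : E x z) (hzx : z ≠ x), z ≠ y →
        (delNode E x).Reachable ⟨u, hux⟩ ⟨z, hzx⟩ := by
  classical
  have hxc : x ∈ c := every_mem hloop hconn hc x
  obtain ⟨k, t, hk⟩ := exists_rotate_head hxc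
  have hc0 : IsEulerianCircuit E (x :: t) := hk ▸ euler_rotate hc k
  have hadj0 : CAdj (cyclicPairs (x :: t)) (u, x) (x, y) := by
    rw [← hk, cp_rotate]
    exact (cadj_rotate k).mpr hadj
  have hcnt : (x :: t).count x = 2 := by rw [count_eq_outdeg hc0, hd]
  obtain ⟨S, T, heq, hS, hT⟩ := decomp_two hcnt
  have ht : t = S ++ x :: T := by injection heq
  subst ht
  clear heq hk hadj hc
  set P0 := cyclicPairs (x :: (S ++ x :: T)) with hP0def
  have hP0 : P0 = Kc x S x ++ Kc x T x := cp_decomp2 x S T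
  have hmemE : ∀ p : V × V, p ∈ P0 ↔ E p.1 p.2 := hc0.2.2
  have hnd : P0.Nodup := hc0.2.1
  -- segments are nonempty
  have hSne : S ≠ [] := by
    rintro rfl
    exact hloop x ((hmemE (x, x)).mp (by rw [hP0]; simp))
  have hTne : T ≠ [] := by
    rintro rfl
    exact hloop x ((hmemE (x, x)).mp (by rw [hP0]; simp [Kc]))
  -- internal adjacency of the segments
  have hadjS : ∀ p ∈ LP S, E p.1 p.2 := by
    intro p hp
    refine (hmemE p).mp ?_
    rw [hP0]
    refine List.mem_append_left _ ?_
    rw [Kc_eq_concat]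
    refine List.mem_append_left _ ?_
    rw [LP_cons_head _ _ hSne]
    exact List.mem_cons_of_mem _ hp
  have hadjT : ∀ p ∈ LP T, E p.1 p.2 := by
    intro p hp
    refine (hmemE p).mp ?_
    rw [hP0]
    refine List.mem_append_right _ ?_
    rw [Kc_eq_concat]
    refine List.mem_append_left _ ?_
    rw [LP_cons_head _ _ hTne]
    exact List.mem_cons_of_mem _ hp
  have hnxS : ∀ a ∈ S, a ≠ x := fun a ha h => hS (h ▸ ha)
  have hnxT : ∀ a ∈ T, a ≠ x := fun a ha h => hT (h ▸ ha)
  have RS := fun {a b} (ha : a ∈ S) (hb : b ∈ S) => chain_reach hloop x S hadjS hnxS ha hb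
  have RT := fun {a b} (ha : a ∈ T) (hb : b ∈ T) => chain_reach hloop x T hadjT hnxT ha hb
  -- every vertex other than x lies in S or T
  have hall : ∀ z : V, z ≠ x → z ∈ S ∨ z ∈ T := by
    intro z hz
    have := every_mem hloop hconn hc0 z
    rcases List.mem_cons.mp this with h | h
    · exact absurd h hz
    rcases List.mem_append.mp h with h | h
    · exact Or.inl h
    rcases List.mem_cons.mp h with h | h
    · exact absurd h hz
    · exact Or.inr h
  -- disconnection witnesses
  have hpre : ¬ (delNode E x).Preconnected := by
    intro hp
    refine hcut ?_
    rw [SimpleGraph.connected_iff]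
    exact ⟨hp, ⟨⟨S.head hSne, hnxS _ (List.head_mem hSne)⟩⟩⟩
  obtain ⟨A, B, hAB⟩ : ∃ A B : {u : V | u ≠ x},
      ¬ (delNode E x).Reachable A B := by
    by_contra hcon
    push_neg at hcon
    exact hpre fun a b => hcon a b
  have noST : ∀ s (hs : s ∈ S) t' (ht' : t' ∈ T),
      ¬ (delNode E x).Reachable ⟨s, hnxS s hs⟩ ⟨t', hnxT t' ht'⟩ := by
    intro s hs t' ht' hr
    rcases hall A.val A.prop with hA | hA <;> rcases hall B.val B.prop with hB | hB
    · exact hAB (RS hA hB)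
    · exact hAB (((RS hA hs).trans hr).trans (RT ht' hB))
    · exact hAB (((RT hA ht').trans hr.symm).trans (RS hs hB))
    · exact hAB (RT hA hB)
  -- identify u
  have hmemux : (u, x) ∈ P0 := (cadj_mem hadj0).1
  -- canonical adjacencies
  have e1 : Kc x S x = LP (x :: S) ++ [(S.getLast hSne, x)] := by
    rw [Kc_eq_concat, List.getLast_cons hSne]
  have e2 : Kc x T x = (x, T.head hTne) :: LP (T ++ [x]) := by
    rw [Kc_eq_cons, head_append_left hTne]
  have e1' : Kc x S x = (x, S.head hSne) :: LP (S ++ [x]) := by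
    rw [Kc_eq_cons, head_append_left hSne]
  have e2' : Kc x T x = LP (x :: T) ++ [(T.getLast hTne, x)] := by
    rw [Kc_eq_concat, List.getLast_cons hTne]
  have cadjST : CAdj P0 (S.getLast hSne, x) (x, T.head hTne) := by
    have : P0 = LP (x :: S) ++ ((S.getLast hSne, x) :: (x, T.head hTne) :: LP (T ++ [x])) := by
      rw [hP0, e1, e2, List.append_assoc]
      rfl
    rw [this]
    exact cadj_intro_mid _ _ _ _
  have cadjTS : CAdj P0 (T.getLast hTne, x) (x, S.head hSne) := by
    have : P0 = (x, S.head hSne) :: ((LP (S ++ [x]) ++ LP (x :: T)) ++ [(T.getLast hTne, x)]) := by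
      rw [hP0, e1', e2']
      simp [List.append_assoc]
    rw [this]
    exact cadj_intro_wrap _ _ _
  -- case on which side u lies
  rcases List.mem_append.mp (hP0 ▸ hmemux) with hu | hu
  · -- u is the last element of S
    have hue : (u, x) = ((x :: S).getLast (by simp), x) := Kc_snd_eq hu rfl hS
    have hu' : u = S.getLast hSne := by
      have := congrArg Prod.fst hue
      simpa [List.getLast_cons hSne] using this
    subst hu'
    have hy : (x, y) = (x, T.head hTne) := cadj_unique hnd hadj0 cadjST
    have hy' : y = T.head hTne := by injection hy
    subst hy'
    constructor
    · exact noST _ (List.getLast_mem hSne) _ (List.head_mem hTne)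
    · intro z hz hzx hzy
      have hmz : (x, z) ∈ P0 := (hmemE (x, z)).mpr hz
      rcases List.mem_append.mp (hP0 ▸ hmz) with h | h
      · have := Kc_fst_eq h rfl hS
        have hz' : z = S.head hSne := by
          have := congrArg Prod.snd this
          simpa [head_append_left hSne] using this
        have hzmem : z ∈ S := hz' ▸ List.head_mem hSne
        exact RS (List.getLast_mem hSne) hzmem
      · exfalso
        have := Kc_fst_eq h rfl hT
        have hz' : z = T.head hTne := by
          have := congrArg Prod.snd this
          simpa [head_append_left hTne] using this
        exact hzy hz'
  · -- u is the last element of T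
    have hue : (u, x) = ((x :: T).getLast (by simp), x) := Kc_snd_eq hu rfl hT
    have hu' : u = T.getLast hTne := by
      have := congrArg Prod.fst hue
      simpa [List.getLast_cons hTne] using this
    subst hu'
    have hy : (x, y) = (x, S.head hSne) := cadj_unique hnd hadj0 cadjTS
    have hy' : y = S.head hSne := by injection hy
    subst hy'
    constructor
    · intro hr
      exact noST _ (List.head_mem hSne) _ (List.getLast_mem hTne) hr.symm
    · intro z hz hzx hzy
      have hmz : (x, z) ∈ P0 := (hmemE (x, z)).mpr hz
      rcases List.mem_append.mp (hP0 ▸ hmz) with h | h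
      · exfalso
        have := Kc_fst_eq h rfl hS
        have hz' : z = S.head hSne := by
          have := congrArg Prod.snd this
          simpa [head_append_left hSne] using this
        exact hzy hz'
      · have := Kc_fst_eq h rfl hT
        have hz' : z = T.head hTne := by
          have := congrArg Prod.snd this
          simpa [head_append_left hTne] using this
        have hzmem : z ∈ T := hz' ▸ List.head_mem hTne
        exact RT (List.getLast_mem hTne) hzmem

end EulerUnique
namespace EulerUnique
variable {V : Type*} {E : V → V → Prop}

lemma det [Fintype V] (hloop : ∀ x : V, ¬ E x x) (hconn : (underlyingUG E).Connected)
    (hA : ∀ v, inA E v) {c c' : List V}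
    (hc : IsEulerianCircuit E c) (hc' : IsEulerianCircuit E c') {u x y y' : V}
    (h1 : CAdj (cyclicPairs c) (u, x) (x, y)) (h2 : CAdj (cyclicPairs c') (u, x) (x, y')) :
    y = y' := by
  have hEy : E x y := (hc.2.2 _).mp (cadj_mem h1).2
  have hEy' : E x y' := (hc'.2.2 _).mp (cadj_mem h2).2
  have hEux : E u x := (hc.2.2 _).mp (cadj_mem h1).1
  have hux : u ≠ x := fun h => hloop x (h ▸ hEux)
  have hyx : y ≠ x := fun h => hloop x (h ▸ hEy)
  have hy'x : y' ≠ x := fun h => hloop x (h ▸ hEy')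
  rcases hA x with hd1 | ⟨hd2, hcut⟩
  · obtain ⟨a, ha⟩ := Set.ncard_eq_one.mp hd1
    have h1 : y ∈ ({a} : Set V) := ha ▸ (hEy : y ∈ {w | E x w})
    have h2 : y' ∈ ({a} : Set V) := ha ▸ (hEy' : y' ∈ {w | E x w})
    rw [Set.mem_singleton_iff] at h1 h2
    rw [h1, h2]
  · obtain ⟨hn1, hfull1⟩ := cut_step hloop hconn hc hd2 hcut h1 hux hyx
    obtain ⟨hn2, _⟩ := cut_step hloop hconn hc' hd2 hcut h2 hux hy'x
    by_contra hne
    exact hn2 (hfull1 y' hEy' hy'x (fun h => hne h.symm))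

lemma cp_chain {c : List V} {i : ℕ} (h : i + 1 < (cyclicPairs c).length) :
    ((cyclicPairs c).get ⟨i, by omega⟩).2 = ((cyclicPairs c).get ⟨i + 1, h⟩).1 := by
  have hlc : (cyclicPairs c).length = c.length := length_cp c
  have hi1 : i + 1 < c.length := by omega
  have e1 : (cyclicPairs c).get ⟨i, by omega⟩
      = (c.get ⟨i, by omega⟩, (c.rotate 1).get ⟨i, by simp; omega⟩) := by
    simp only [List.get_eq_getElem]; exact List.getElem_zip
  have e2 : (cyclicPairs c).get ⟨i + 1, h⟩
      = (c.get ⟨i + 1, hi1⟩, (c.rotate 1).get ⟨i + 1, by simp; omega⟩) := by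
    simp only [List.get_eq_getElem]; exact List.getElem_zip
  rw [e1, e2]
  have e3 := List.get_rotate c 1 ⟨i, by simp; omega⟩
  simp only at e3
  rw [e3]
  simp [Nat.mod_eq_of_lt hi1]

lemma cadj_get {α : Type*} (l : List α) (i : ℕ) (h : i + 1 < l.length) :
    CAdj l (l.get ⟨i, by omega⟩) (l.get ⟨i + 1, h⟩) := by
  have hsplit : l = l.take i ++ l.get ⟨i, by omega⟩ :: l.get ⟨i + 1, h⟩ :: l.drop (i + 2) := by
    conv_lhs => rw [← List.take_append_drop i l]
    congr 1
    rw [List.drop_eq_getElem_cons (by omega : i < l.length),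
      List.drop_eq_getElem_cons (by omega : i + 1 < l.length)]
    rfl
  have := cadj_intro_mid (l.take i) (l.drop (i + 2)) (l.get ⟨i, by omega⟩) (l.get ⟨i + 1, h⟩)
  rwa [← hsplit] at this

lemma backward [Fintype V] (hloop : ∀ x : V, ¬ E x x) (hconn : (underlyingUG E).Connected)
    (hA : ∀ v, inA E v) {c c' : List V}
    (hc : IsEulerianCircuit E c) (hc' : IsEulerianCircuit E c') :
    ∃ k, c' = c.rotate k := by
  classical
  have hlen : (cyclicPairs c).length = (cyclicPairs c').length := by
    rw [length_eq_ncard' hc.2.1 (s := {p : V × V | E p.1 p.2}) hc.2.2,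
        length_eq_ncard' hc'.2.1 (s := {p : V × V | E p.1 p.2}) hc'.2.2]
  have hPne : cyclicPairs c ≠ [] := cp_ne_nil hc.1
  set p0 := (cyclicPairs c).head hPne with hp0def
  have hp0P : p0 ∈ cyclicPairs c := List.head_mem _
  have hp0P' : p0 ∈ cyclicPairs c' := (hc'.2.2 p0).mpr ((hc.2.2 p0).mp hp0P)
  obtain ⟨⟨k', hk'lt⟩, hk'get⟩ := List.mem_iff_get.mp hp0P'
  set c'' := c'.rotate k' with hc''def
  have hc'' : IsEulerianCircuit E c'' := euler_rotate hc' k'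
  have hP'' : cyclicPairs c'' = (cyclicPairs c').rotate k' := cp_rotate c' k'
  have hlen'' : (cyclicPairs c'').length = (cyclicPairs c).length := by
    rw [hP'', List.length_rotate, hlen]
  have hn : 0 < (cyclicPairs c).length := List.length_pos_iff.mpr hPne
  have hhead : (cyclicPairs c'').get ⟨0, by omega⟩ = p0 := by
    have e0 := List.get_of_eq hP'' ⟨0, by omega⟩
    rw [e0]
    simpa [List.getElem_rotate, Nat.mod_eq_of_lt hk'lt] using hk'get
  have hind : ∀ i (h : i < (cyclicPairs c).length),
      (cyclicPairs c).get ⟨i, h⟩ = (cyclicPairs c'').get ⟨i, by omega⟩ := by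
    intro i
    induction i with
    | zero =>
      intro h
      rw [hhead]
      exact (List.get_mk_zero hn) ▸ rfl
    | succ i ih =>
      intro h
      have hi : i < (cyclicPairs c).length := by omega
      have h'' : i + 1 < (cyclicPairs c'').length := by omega
      have hi'' : i < (cyclicPairs c'').length := by omega
      have hprev := ih hi
      have hch1 := cp_chain (c := c) (i := i) h
      have hch2 := cp_chain (c := c'') (i := i) h''
      have hA1 := cadj_get (cyclicPairs c) i h
      have hA2 := cadj_get (cyclicPairs c'') i h''
      have hA1' : CAdj (cyclicPairs c)
          (((cyclicPairs c).get ⟨i, hi⟩).1, ((cyclicPairs c).get ⟨i, hi⟩).2)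
          (((cyclicPairs c).get ⟨i, hi⟩).2, ((cyclicPairs c).get ⟨i + 1, h⟩).2) := by
        rw [Prod.mk.eta, hch1, Prod.mk.eta]
        exact hA1
      have hA2' : CAdj (cyclicPairs c'')
          (((cyclicPairs c).get ⟨i, hi⟩).1, ((cyclicPairs c).get ⟨i, hi⟩).2)
          (((cyclicPairs c).get ⟨i, hi⟩).2, ((cyclicPairs c'').get ⟨i + 1, h''⟩).2) := by
        rw [hprev, Prod.mk.eta, hch2, Prod.mk.eta]
        exact hA2
      have hsnd := det hloop hconn hA hc hc'' hA1' hA2'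
      have hfst : ((cyclicPairs c).get ⟨i + 1, h⟩).1
          = ((cyclicPairs c'').get ⟨i + 1, h''⟩).1 := by
        rw [← hch1, ← hch2, hprev]
      exact Prod.ext hfst hsnd
  have hPeq : cyclicPairs c = cyclicPairs c'' := by
    apply List.ext_get hlen''.symm
    intro i h1 h2
    exact hind i h1
  have hceq : c = c'' := by
    rw [← map_fst_cp c, ← map_fst_cp c'', hPeq]
  obtain ⟨m', hm'⟩ := rotate_inv c' k'
  exact ⟨m', by rw [← hm', ← hc''def, ← hceq]⟩

end EulerUnique
namespace EulerUnique
variable {V : Type*} {E : V → V → Prop}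

lemma notunique_of_three [Fintype V] [DecidableEq V] (hloop : ∀ x : V, ¬ E x x)
    {c : List V} (hc : IsEulerianCircuit E c) {v : V} (hv : v ∈ c)
    (hd : 3 ≤ outdeg E v) :
    ∃ ca cb : List V, IsEulerianCircuit E ca ∧ IsEulerianCircuit E cb ∧
      ∀ k, cb ≠ ca.rotate k := by
  obtain ⟨k0, t, hk0⟩ := exists_rotate_head hv
  have hc0 : IsEulerianCircuit E (v :: t) := hk0 ▸ euler_rotate hc k0
  have hcnt : 3 ≤ (v :: t).count v := by rw [count_eq_outdeg hc0]; exact hd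
  obtain ⟨S, T, R, heq, hS, hT⟩ := decomp_three hcnt
  have ht : t = S ++ v :: (T ++ v :: R) := by injection heq
  subst ht
  have hPa : cyclicPairs (v :: (S ++ v :: (T ++ v :: R)))
      = Kc v S v ++ (Kc v T v ++ Kc v R v) := cp_decomp3 v S T R
  have hPb : cyclicPairs (v :: (T ++ v :: (S ++ v :: R)))
      = Kc v T v ++ (Kc v S v ++ Kc v R v) := cp_decomp3 v T S R
  have hperm : (cyclicPairs (v :: (T ++ v :: (S ++ v :: R)))).Perm
      (cyclicPairs (v :: (S ++ v :: (T ++ v :: R)))) := by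
    rw [hPa, hPb, ← List.append_assoc, ← List.append_assoc]
    exact (List.perm_append_comm).append_right _
  have hcb : IsEulerianCircuit E (v :: (T ++ v :: (S ++ v :: R))) := by
    refine ⟨by simp, hperm.nodup_iff.mpr hc0.2.1, fun p => ?_⟩
    rw [hperm.mem_iff]
    exact hc0.2.2 p
  have hSne : S ≠ [] := by
    rintro rfl
    exact hloop v ((hc0.2.2 (v, v)).mp (by rw [hPa]; simp))
  have hTne : T ≠ [] := by
    rintro rfl
    exact hloop v ((hc0.2.2 (v, v)).mp (by rw [hPa]; simp [Kc]))
  have hRne : R ≠ [] := by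
    rintro rfl
    exact hloop v ((hc0.2.2 (v, v)).mp (by rw [hPa]; simp [Kc]))
  have eS : Kc v S v = LP (v :: S) ++ [(S.getLast hSne, v)] := by
    rw [Kc_eq_concat, List.getLast_cons hSne]
  have eT : Kc v T v = (v, T.head hTne) :: LP (T ++ [v]) := by
    rw [Kc_eq_cons, head_append_left hTne]
  have eR : Kc v R v = (v, R.head hRne) :: LP (R ++ [v]) := by
    rw [Kc_eq_cons, head_append_left hRne]
  have hA1 : CAdj (cyclicPairs (v :: (S ++ v :: (T ++ v :: R))))
      (S.getLast hSne, v) (v, T.head hTne) := by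
    rw [hPa, eS, eT]
    have : (LP (v :: S) ++ [(S.getLast hSne, v)])
          ++ (((v, T.head hTne) :: LP (T ++ [v])) ++ Kc v R v)
        = LP (v :: S) ++ ((S.getLast hSne, v) :: (v, T.head hTne)
            :: (LP (T ++ [v]) ++ Kc v R v)) := by simp
    rw [this]
    exact cadj_intro_mid _ _ _ _
  have hA2 : CAdj (cyclicPairs (v :: (T ++ v :: (S ++ v :: R))))
      (S.getLast hSne, v) (v, R.head hRne) := by
    rw [hPb, eS, eR]
    have : Kc v T v ++ ((LP (v :: S) ++ [(S.getLast hSne, v)])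
          ++ ((v, R.head hRne) :: LP (R ++ [v])))
        = (Kc v T v ++ LP (v :: S)) ++ ((S.getLast hSne, v) :: (v, R.head hRne)
            :: LP (R ++ [v])) := by simp
    rw [this]
    exact cadj_intro_mid _ _ _ _
  refine ⟨_, _, hc0, hcb, ?_⟩
  intro k hbk
  have hrot : cyclicPairs (v :: (T ++ v :: (S ++ v :: R)))
      = (cyclicPairs (v :: (S ++ v :: (T ++ v :: R)))).rotate k := by
    rw [hbk, cp_rotate]
  have hA2' : CAdj (cyclicPairs (v :: (S ++ v :: (T ++ v :: R))))
      (S.getLast hSne, v) (v, R.head hRne) := by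
    rw [hrot] at hA2
    exact (cadj_rotate k).mp hA2
  have heq2 := cadj_unique hc0.2.1 hA1 hA2'
  have hthr : T.head hTne = R.head hRne := by injection heq2
  have hnd := hc0.2.1
  rw [hPa] at hnd
  have hnd2 : (Kc v T v ++ Kc v R v).Nodup := hnd.of_append_right
  have hdisj := List.disjoint_of_nodup_append hnd2
  refine hdisj (show (v, T.head hTne) ∈ Kc v T v by rw [eT]; exact List.mem_cons_self) ?_
  rw [eR, hthr]
  exact List.mem_cons_self

lemma notunique_of_two [Fintype V] [DecidableEq V] (hloop : ∀ x : V, ¬ E x x)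
    (hconn : (underlyingUG E).Connected)
    {c : List V} (hc : IsEulerianCircuit E c) {v : V}
    (hd : outdeg E v = 2) (hncut : ¬ IsCutNode (underlyingUG E) v) :
    ∃ ca cb : List V, IsEulerianCircuit E ca ∧ IsEulerianCircuit E cb ∧
      ∀ k, cb ≠ ca.rotate k := by
  have hv : v ∈ c := every_mem hloop hconn hc v
  obtain ⟨k0, t, hk0⟩ := exists_rotate_head hv
  have hc0 : IsEulerianCircuit E (v :: t) := hk0 ▸ euler_rotate hc k0
  have hcnt : (v :: t).count v = 2 := by rw [count_eq_outdeg hc0]; exact hd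
  obtain ⟨S, T, heq, hS, hT⟩ := decomp_two hcnt
  have ht : t = S ++ v :: T := by injection heq
  subst ht
  have hPa : cyclicPairs (v :: (S ++ v :: T)) = Kc v S v ++ Kc v T v := cp_decomp2 v S T
  have hSne : S ≠ [] := by
    rintro rfl
    exact hloop v ((hc0.2.2 (v, v)).mp (by rw [hPa]; simp))
  have hTne : T ≠ [] := by
    rintro rfl
    exact hloop v ((hc0.2.2 (v, v)).mp (by rw [hPa]; simp [Kc]))
  have hnxS : ∀ a ∈ S, a ≠ v := fun a ha h => hS (h ▸ ha)
  have hnxT : ∀ a ∈ T, a ≠ v := fun a ha h => hT (h ▸ ha)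
  have hDconn : (delNode E v).Connected := not_not.mp hncut
  -- find a shared vertex w
  obtain ⟨w, hwS, hwT⟩ : ∃ w, w ∈ S ∧ w ∈ T := by
    by_cases hsub : T.head hTne ∈ S
    · exact ⟨T.head hTne, hsub, List.head_mem hTne⟩
    · obtain ⟨p⟩ := hDconn.preconnected
        ⟨S.head hSne, hnxS _ (List.head_mem hSne)⟩
        ⟨T.head hTne, hnxT _ (List.head_mem hTne)⟩
      obtain ⟨d, _, hd1, hd2⟩ := p.exists_boundary_dart {z : {u : V | u ≠ v} | z.val ∈ S}
        (List.head_mem hSne) hsub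
      have hadj : (underlyingUG E).Adj d.toProd.1.val d.toProd.2.val := del_adj.mp d.adj
      have hbnev : d.toProd.2.val ≠ v := d.toProd.2.prop
      have hanev : d.toProd.1.val ≠ v := d.toProd.1.prop
      rcases (show d.toProd.1.val ≠ d.toProd.2.val ∧ (E d.toProd.1.val d.toProd.2.val ∨ E d.toProd.2.val d.toProd.1.val) from hadj).2 with hE | hE
      · have hq : (d.toProd.1.val, d.toProd.2.val) ∈ cyclicPairs (v :: (S ++ v :: T)) :=
          (hc0.2.2 _).mpr hE
        rcases List.mem_append.mp (hPa ▸ hq) with h | h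
        · exfalso
          rcases List.mem_append.mp (Kc_snd_mem h) with h' | h'
          · exact hd2 h'
          · exact hbnev (by simpa using h')
        · rcases List.mem_cons.mp (Kc_fst_mem h) with h' | h'
          · exact absurd h' hanev
          · exact ⟨d.toProd.1.val, hd1, h'⟩
      · have hq : (d.toProd.2.val, d.toProd.1.val) ∈ cyclicPairs (v :: (S ++ v :: T)) :=
          (hc0.2.2 _).mpr hE
        rcases List.mem_append.mp (hPa ▸ hq) with h | h
        · exfalso
          rcases List.mem_cons.mp (Kc_fst_mem h) with h' | h'
          · exact hbnev h'
          · exact hd2 h'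
        · rcases List.mem_append.mp (Kc_snd_mem h) with h' | h'
          · exact ⟨d.toProd.1.val, hd1, h'⟩
          · exact absurd (by simpa using h') hanev
  obtain ⟨S1, S2, hSsplit, _⟩ := split_first hwS
  obtain ⟨T1, T2, hTsplit, _⟩ := split_first hwT
  subst hSsplit
  subst hTsplit
  have hPa' : cyclicPairs (v :: ((S1 ++ w :: S2) ++ v :: (T1 ++ w :: T2)))
      = (Kc v S1 w ++ Kc w S2 v) ++ (Kc v T1 w ++ Kc w T2 v) := by
    rw [hPa, Kc_split, Kc_split]
  have hPb : cyclicPairs (v :: ((S1 ++ w :: T2) ++ v :: (T1 ++ w :: S2)))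
      = (Kc v S1 w ++ Kc w T2 v) ++ (Kc v T1 w ++ Kc w S2 v) := by
    rw [cp_decomp2, Kc_split, Kc_split]
  have hperm : (cyclicPairs (v :: ((S1 ++ w :: T2) ++ v :: (T1 ++ w :: S2)))).Perm
      (cyclicPairs (v :: ((S1 ++ w :: S2) ++ v :: (T1 ++ w :: T2)))) := by
    rw [hPa', hPb]
    rw [List.perm_iff_count]
    intro a
    simp only [List.count_append]
    omega
  have hcb : IsEulerianCircuit E (v :: ((S1 ++ w :: T2) ++ v :: (T1 ++ w :: S2))) := by
    refine ⟨by simp, hperm.nodup_iff.mpr hc0.2.1, fun p => ?_⟩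
    rw [hperm.mem_iff]
    exact hc0.2.2 p
  have eA : Kc v S1 w = LP (v :: S1) ++ [((v :: S1).getLast (by simp), w)] := Kc_eq_concat _ _ _
  have eB : Kc w S2 v = (w, (S2 ++ [v]).head (by simp)) :: LP (S2 ++ [v]) := Kc_eq_cons _ _ _
  have eD : Kc w T2 v = (w, (T2 ++ [v]).head (by simp)) :: LP (T2 ++ [v]) := Kc_eq_cons _ _ _
  have hA1 : CAdj (cyclicPairs (v :: ((S1 ++ w :: S2) ++ v :: (T1 ++ w :: T2))))
      ((v :: S1).getLast (by simp), w) (w, (S2 ++ [v]).head (by simp)) := by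
    rw [hPa', eA, eB]
    have : (LP (v :: S1) ++ [((v :: S1).getLast (by simp), w)]
          ++ ((w, (S2 ++ [v]).head (by simp)) :: LP (S2 ++ [v])))
          ++ (Kc v T1 w ++ Kc w T2 v)
        = LP (v :: S1) ++ (((v :: S1).getLast (by simp), w)
            :: (w, (S2 ++ [v]).head (by simp))
            :: (LP (S2 ++ [v]) ++ (Kc v T1 w ++ Kc w T2 v))) := by simp
    rw [this]
    exact cadj_intro_mid _ _ _ _
  have hA2 : CAdj (cyclicPairs (v :: ((S1 ++ w :: T2) ++ v :: (T1 ++ w :: S2))))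
      ((v :: S1).getLast (by simp), w) (w, (T2 ++ [v]).head (by simp)) := by
    rw [hPb, eA, eD]
    have : (LP (v :: S1) ++ [((v :: S1).getLast (by simp), w)]
          ++ ((w, (T2 ++ [v]).head (by simp)) :: LP (T2 ++ [v])))
          ++ (Kc v T1 w ++ Kc w S2 v)
        = LP (v :: S1) ++ (((v :: S1).getLast (by simp), w)
            :: (w, (T2 ++ [v]).head (by simp))
            :: (LP (T2 ++ [v]) ++ (Kc v T1 w ++ Kc w S2 v))) := by simp
    rw [this]
    exact cadj_intro_mid _ _ _ _
  refine ⟨_, _, hc0, hcb, ?_⟩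
  intro k hbk
  have hrot : cyclicPairs (v :: ((S1 ++ w :: T2) ++ v :: (T1 ++ w :: S2)))
      = (cyclicPairs (v :: ((S1 ++ w :: S2) ++ v :: (T1 ++ w :: T2)))).rotate k := by
    rw [hbk, cp_rotate]
  have hA2' : CAdj (cyclicPairs (v :: ((S1 ++ w :: S2) ++ v :: (T1 ++ w :: T2))))
      ((v :: S1).getLast (by simp), w) (w, (T2 ++ [v]).head (by simp)) := by
    rw [hrot] at hA2
    exact (cadj_rotate k).mp hA2
  have heq2 := cadj_unique hc0.2.1 hA1 hA2'
  have hbd : (S2 ++ [v]).head (by simp) = (T2 ++ [v]).head (by simp) := by injection heq2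
  have hnd := hc0.2.1
  rw [hPa'] at hnd
  have hdisj := List.disjoint_of_nodup_append hnd
  refine hdisj (List.mem_append_right _ (show (w, (S2 ++ [v]).head (by simp)) ∈ Kc w S2 v
    by rw [eB]; exact List.mem_cons_self)) ?_
  refine List.mem_append_right _ ?_
  rw [eD, hbd]
  exact List.mem_cons_self

end EulerUnique
/-- `G` has a unique Eulerian circuit (up to cyclic rotation) iff `A(G) = V`. -/
theorem unique_eulerian_iff_A_eq_V {V : Type*} [Fintype V] (E : V → V → Prop)
    (hloop : ∀ x : V, ¬ E x x) (hconn : (underlyingUG E).Connected)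
    (heul : ∃ c : List V, IsEulerianCircuit E c) :
    (∀ c c' : List V, IsEulerianCircuit E c → IsEulerianCircuit E c' →
        ∃ k : ℕ, c' = c.rotate k) ↔ ∀ v : V, inA E v := by
  classical
  obtain ⟨c, hc⟩ := heul
  constructor
  · intro huniq
    by_contra hnA
    push_neg at hnA
    obtain ⟨v, hv⟩ := hnA
    rw [inA, not_or] at hv
    obtain ⟨h1, h2⟩ := hv
    have hvmem : v ∈ c := EulerUnique.every_mem hloop hconn hc v
    have hdpos : 1 ≤ outdeg E v := by
      have heq := EulerUnique.count_eq_outdeg hc v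
      have hcp : 0 < c.count v := List.count_pos_iff.mpr hvmem
      omega
    have hd2 : 2 ≤ outdeg E v := by
      rcases Nat.lt_or_ge (outdeg E v) 2 with h | h
      · exfalso
        apply h1
        omega
      · exact h
    rcases eq_or_lt_of_le hd2 with hdeq | hdgt
    · have hncut : ¬ IsCutNode (underlyingUG E) v := fun hcut => h2 ⟨hdeq.symm, hcut⟩
      obtain ⟨ca, cb, hca, hcb, hne⟩ :=
        EulerUnique.notunique_of_two hloop hconn hc hdeq.symm hncut
      obtain ⟨k, hk⟩ := huniq ca cb hca hcb
      exact hne k hk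
    · obtain ⟨ca, cb, hca, hcb, hne⟩ :=
        EulerUnique.notunique_of_three hloop hc hvmem hdgt
      obtain ⟨k, hk⟩ := huniq ca cb hca hcb
      exact hne k hk
  · intro hA c1 c2 hc1 hc2
    exact EulerUnique.backward hloop hconn hA hc1 hc2
end

section
/- Let G be a directed Eulerian graph without parallel edges or self-loops. If every node v of G satisfies d(v) = 1, or d(v) = 2 and v is a cut node of U(G), then for every edge (u,v) of G there is a unique edge (v,w) such that (u,v) is immediately followed by (v,w) in every Eulerian circuit of G. -/
namespace ForcedSucc
variable {V : Type*}

lemma length_cyclicPairs (c : List V) : (cyclicPairs c).length = c.length := by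
  simp [cyclicPairs]

def cIdx (c : List V) (hn : 0 < c.length) (i : ℕ) : V :=
  c.get ⟨i % c.length, Nat.mod_lt _ hn⟩

lemma cIdx_congr (c : List V) (hn : 0 < c.length) {i j : ℕ}
    (h : i % c.length = j % c.length) : cIdx c hn i = cIdx c hn j := by
  simp only [cIdx, List.get_eq_getElem, h]

lemma cyclicPairs_getElem (c : List V) (hn : 0 < c.length) (j : ℕ)
    (h : j < (cyclicPairs c).length) :
    (cyclicPairs c).get ⟨j, h⟩ = (cIdx c hn j, cIdx c hn (j+1)) := by
  have hj : j < c.length := by simpa [length_cyclicPairs] using h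
  have h1 : j % c.length = j := Nat.mod_eq_of_lt hj
  simp [cyclicPairs, List.getElem_zip, List.getElem_rotate, cIdx, h1]

lemma pair_mem_cyclicPairs (c : List V) (hn : 0 < c.length) (i : ℕ) :
    (cIdx c hn i, cIdx c hn (i+1)) ∈ cyclicPairs c := by
  have hj : i % c.length < (cyclicPairs c).length := by
    simpa [length_cyclicPairs] using Nat.mod_lt _ hn
  have heq := cyclicPairs_getElem c hn (i % c.length) hj
  have e1 : cIdx c hn (i % c.length) = cIdx c hn i :=
    cIdx_congr c hn (Nat.mod_mod_of_dvd i dvd_rfl)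
  have e2 : cIdx c hn (i % c.length + 1) = cIdx c hn (i+1) :=
    cIdx_congr c hn ((Nat.mod_modEq i c.length).add_right 1)
  rw [e1, e2] at heq
  exact heq ▸ List.get_mem _ _

lemma mem_cyclicPairs_elim (c : List V) (hn : 0 < c.length) {p : V × V}
    (hp : p ∈ cyclicPairs c) :
    ∃ j < c.length, p = (cIdx c hn j, cIdx c hn (j+1)) := by
  obtain ⟨j, rfl⟩ := List.mem_iff_get.mp hp
  exact ⟨j, by simpa [length_cyclicPairs] using j.2, cyclicPairs_getElem c hn j j.2⟩

lemma cIdx_rotate (c : List V) (hn : 0 < c.length) (k : ℕ)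
    (hr : 0 < (c.rotate k).length) (i : ℕ) :
    cIdx (c.rotate k) hr i = cIdx c hn (i + k) := by
  simp only [cIdx, List.get_eq_getElem, List.getElem_rotate, List.length_rotate]
  congr 1
  rw [Nat.mod_add_mod]

variable {E : V → V → Prop}

lemma edge_of_pair {c : List V} (hc : IsEulerianCircuit E c) (hn : 0 < c.length) (i : ℕ) :
    E (cIdx c hn i) (cIdx c hn (i+1)) :=
  (hc.2.2 _).mp (pair_mem_cyclicPairs c hn i)

lemma exists_idx_of_edge {c : List V} (hc : IsEulerianCircuit E c) (hn : 0 < c.length)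
    {a b : V} (h : E a b) :
    ∃ j < c.length, a = cIdx c hn j ∧ b = cIdx c hn (j+1) := by
  obtain ⟨j, hj, hp⟩ := mem_cyclicPairs_elim c hn ((hc.2.2 (a, b)).mpr h)
  rw [Prod.ext_iff] at hp
  exact ⟨j, hj, hp.1, hp.2⟩

lemma idx_inj {c : List V} (hc : IsEulerianCircuit E c) (hn : 0 < c.length) {i j : ℕ}
    (hi : i < c.length) (hj : j < c.length)
    (h1 : cIdx c hn i = cIdx c hn j) (h2 : cIdx c hn (i+1) = cIdx c hn (j+1)) : i = j := by
  have hi' : i < (cyclicPairs c).length := by simpa [length_cyclicPairs] using hi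
  have hj' : j < (cyclicPairs c).length := by simpa [length_cyclicPairs] using hj
  have e : (cyclicPairs c).get ⟨i, hi'⟩ = (cyclicPairs c).get ⟨j, hj'⟩ := by
    rw [cyclicPairs_getElem c hn i hi', cyclicPairs_getElem c hn j hj', h1, h2]
  have := List.nodup_iff_injective_get.mp hc.2.1 e
  exact Fin.val_eq_val _ _ |>.mpr this

lemma idx_modeq {c : List V} (hc : IsEulerianCircuit E c) (hn : 0 < c.length) {i j : ℕ}
    (h1 : cIdx c hn i = cIdx c hn j) (h2 : cIdx c hn (i+1) = cIdx c hn (j+1)) :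
    i % c.length = j % c.length := by
  apply idx_inj hc hn (Nat.mod_lt _ hn) (Nat.mod_lt _ hn)
  · rw [cIdx_congr c hn (Nat.mod_mod_of_dvd i dvd_rfl),
      cIdx_congr c hn (Nat.mod_mod_of_dvd j dvd_rfl), h1]
  · rw [cIdx_congr c hn ((Nat.mod_modEq i c.length).add_right 1),
      cIdx_congr c hn ((Nat.mod_modEq j c.length).add_right 1), h2]

lemma two_le_length {c : List V} (hc : IsEulerianCircuit E c) (hn : 0 < c.length)
    (hloop : ∀ x : V, ¬ E x x) {a b : V} (h : E a b) : 2 ≤ c.length := by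
  by_contra hlt
  have h1 : c.length = 1 := by omega
  obtain ⟨j, _, ha, hb⟩ := exists_idx_of_edge hc hn h
  have : a = b := by
    rw [ha, hb]; exact cIdx_congr c hn (by simp [h1])
  exact hloop b (this ▸ h)

lemma cons_cons_drop (M : List (V × V)) (hM : 2 ≤ M.length) :
    M = M.get ⟨0, by omega⟩ :: M.get ⟨1, by omega⟩ :: M.drop 2 := by
  match M, hM with
  | a :: b :: r, _ => rfl

lemma get_eq_of_eq {α : Type*} {l l' : List α} (h : l = l') {i : ℕ} (hi : i < l.length)
    (hi' : i < l'.length) : l.get ⟨i, hi⟩ = l'.get ⟨i, hi'⟩ := by subst h; rfl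

lemma get_append_mid0 {α : Type*} (s t : List α) (a b : α)
    (h : s.length < (s ++ [a, b] ++ t).length) :
    (s ++ [a, b] ++ t).get ⟨s.length, h⟩ = a := by
  simp only [List.get_eq_getElem]
  rw [List.getElem_append_left (by simp), List.getElem_append_right (by omega)]
  simp

lemma get_append_mid1 {α : Type*} (s t : List α) (a b : α)
    (h : s.length + 1 < (s ++ [a, b] ++ t).length) :
    (s ++ [a, b] ++ t).get ⟨s.length + 1, h⟩ = b := by
  simp only [List.get_eq_getElem]
  rw [List.getElem_append_left (by simp), List.getElem_append_right (by omega)]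
  simp

lemma appears_of_idx (c : List V) (hn : 0 < c.length) (h2 : 2 ≤ c.length) (i : ℕ) :
    Appears [cIdx c hn i, cIdx c hn (i+1), cIdx c hn (i+2)] c := by
  refine ⟨i, ?_⟩
  have hr : 0 < (c.rotate i).length := by simpa using hn
  have hL : 2 ≤ (cyclicPairs (c.rotate i)).length := by
    simpa [length_cyclicPairs] using h2
  have g0 : (cyclicPairs (c.rotate i)).get ⟨0, by omega⟩ = (cIdx c hn i, cIdx c hn (i+1)) := by
    refine (cyclicPairs_getElem (c.rotate i) hr 0 (by omega)).trans ?_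
    rw [cIdx_rotate c hn i hr 0, cIdx_rotate c hn i hr 1,
      (by omega : 0 + i = i), (by omega : 1 + i = i + 1)]
  have g1 : (cyclicPairs (c.rotate i)).get ⟨1, by omega⟩ = (cIdx c hn (i+1), cIdx c hn (i+2)) := by
    refine (cyclicPairs_getElem (c.rotate i) hr 1 (by omega)).trans ?_
    rw [cIdx_rotate c hn i hr 1, cIdx_rotate c hn i hr 2,
      (by omega : 1 + i = i + 1), (by omega : 2 + i = i + 2)]
  have hzip : ([cIdx c hn i, cIdx c hn (i+1), cIdx c hn (i+2)].zip
      [cIdx c hn i, cIdx c hn (i+1), cIdx c hn (i+2)].tail)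
      = [(cIdx c hn i, cIdx c hn (i+1)), (cIdx c hn (i+1), cIdx c hn (i+2))] := rfl
  rw [hzip]
  have hd := cons_cons_drop (cyclicPairs (c.rotate i)) hL
  rw [g0, g1] at hd
  exact List.IsPrefix.isInfix ⟨(cyclicPairs (c.rotate i)).drop 2, hd.symm⟩

lemma appears_elim {c : List V} (hn : 0 < c.length) {u v w : V}
    (h : Appears [u, v, w] c) :
    ∃ i, u = cIdx c hn i ∧ v = cIdx c hn (i+1) ∧ w = cIdx c hn (i+2) := by
  obtain ⟨k, hinf⟩ := h
  have hz : ([u, v, w].zip [u, v, w].tail) = [(u, v), (v, w)] := rfl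
  rw [hz] at hinf
  obtain ⟨s, t, hst⟩ := hinf
  have hr : 0 < (c.rotate k).length := by simpa using hn
  have hlenL : (cyclicPairs (c.rotate k)).length = c.length := by
    simp [length_cyclicPairs]
  have hlen : s.length + 2 + t.length = c.length := by
    have := congrArg List.length hst
    simp [hlenL] at this
    omega
  have hj0 : s.length < (cyclicPairs (c.rotate k)).length := by omega
  have hj1 : s.length + 1 < (cyclicPairs (c.rotate k)).length := by omega
  have e0 : (cyclicPairs (c.rotate k)).get ⟨s.length, hj0⟩ = (u, v) :=
    (get_eq_of_eq hst.symm hj0 (by simp)).trans (get_append_mid0 s t (u, v) (v, w) _)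
  have e1 : (cyclicPairs (c.rotate k)).get ⟨s.length + 1, hj1⟩ = (v, w) :=
    (get_eq_of_eq hst.symm hj1 (by simp)).trans (get_append_mid1 s t (u, v) (v, w) _)
  have e0' := (cyclicPairs_getElem (c.rotate k) hr s.length hj0).symm.trans e0
  have e1' := (cyclicPairs_getElem (c.rotate k) hr (s.length + 1) hj1).symm.trans e1
  rw [cIdx_rotate c hn k hr, cIdx_rotate c hn k hr, Prod.ext_iff] at e0' e1'
  simp only at e0' e1'
  refine ⟨s.length + k, e0'.1.symm, ?_, ?_⟩
  · rw [← e0'.2]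
    exact cIdx_congr c hn (by congr 1; omega)
  · rw [← e1'.2]
    exact cIdx_congr c hn (by congr 1; omega)
lemma succ_unique {c : List V} (hc : IsEulerianCircuit E c) (hn : 0 < c.length) {u v w w' : V}
    (h : Appears [u, v, w] c) (h' : Appears [u, v, w'] c) : w = w' := by
  obtain ⟨i, hu, hv, hw⟩ := appears_elim hn h
  obtain ⟨i', hu', hv', hw'⟩ := appears_elim hn h'
  have hmod : i % c.length = i' % c.length :=
    idx_modeq hc hn (hu ▸ hu'.symm ▸ rfl : cIdx c hn i = cIdx c hn i')
      (hv ▸ hv'.symm ▸ rfl)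
  rw [hw, hw']
  exact cIdx_congr c hn ((Nat.ModEq.add_right 2 hmod : _))

lemma seg_reach {c : List V} (hc : IsEulerianCircuit E c) (hn : 0 < c.length)
    (hloop : ∀ x : V, ¬ E x x) (v : V) (i k : ℕ)
    (hne : ∀ t ≤ k, cIdx c hn (i + t) ≠ v) :
    (delNode E v).Reachable ⟨cIdx c hn i, hne 0 (Nat.zero_le _)⟩
      ⟨cIdx c hn (i + k), hne k le_rfl⟩ := by
  induction k with
  | zero => exact SimpleGraph.Reachable.refl _
  | succ k ih =>
    have ih' := ih (fun t ht => hne t (by omega))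
    refine ih'.trans (SimpleGraph.Adj.reachable ?_)
    have he : E (cIdx c hn (i+k)) (cIdx c hn (i+k+1)) := edge_of_pair hc hn (i+k)
    have hne2 : cIdx c hn (i+k) ≠ cIdx c hn (i+k+1) := by
      intro h; exact hloop _ (h ▸ he)
    show (delNode E v).Adj ⟨cIdx c hn (i+k), _⟩ ⟨cIdx c hn (i+k+1), _⟩
    show ((underlyingUG E).induce _).Adj _ _
    simp only [SimpleGraph.induce, SimpleGraph.comap_adj]
    exact ⟨hne2, Or.inl he⟩

lemma seg_reach' {c : List V} (hc : IsEulerianCircuit E c) (hn : 0 < c.length)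
    (hloop : ∀ x : V, ¬ E x x) {v : V} (i k : ℕ) {x y : V}
    (hx : cIdx c hn i = x) (hy : cIdx c hn (i + k) = y)
    (hne : ∀ t ≤ k, cIdx c hn (i + t) ≠ v) (hx' : x ≠ v) (hy' : y ≠ v) :
    (delNode E v).Reachable ⟨x, hx'⟩ ⟨y, hy'⟩ := by
  subst hx; subst hy
  exact seg_reach hc hn hloop v i k hne

lemma notv {c : List V} (hn : 0 < c.length) {v : V} {p1 p2 : ℕ}
    (only : ∀ j < c.length, cIdx c hn j = v → j = p1 ∨ j = p2)
    (s : ℕ) (h1 : s % c.length ≠ p1) (h2 : s % c.length ≠ p2) : cIdx c hn s ≠ v := by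
  intro hv
  have hm : cIdx c hn (s % c.length) = v :=
    (cIdx_congr c hn (Nat.mod_mod_of_dvd s dvd_rfl)).trans hv
  rcases only _ (Nat.mod_lt _ hn) hm with h | h
  exacts [h1 h, h2 h]

lemma positions {c : List V} (hc : IsEulerianCircuit E c) (hn : 0 < c.length)
    (v : V) (hdeg : outdeg E v = 2) :
    ∃ p1 p2, p1 < p2 ∧ p2 < c.length ∧ cIdx c hn p1 = v ∧ cIdx c hn p2 = v ∧
      (∀ j < c.length, cIdx c hn j = v → j = p1 ∨ j = p2) ∧
      cIdx c hn (p1+1) ≠ cIdx c hn (p2+1) ∧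
      (∀ z, E v z → z = cIdx c hn (p1+1) ∨ z = cIdx c hn (p2+1)) := by
  have hdeg' : Set.ncard {z | E v z} = 2 := hdeg
  obtain ⟨x, y, hxy, hO⟩ := Set.ncard_eq_two.mp hdeg'
  have hx : E v x := by
    have : x ∈ ({x, y} : Set V) := by simp
    rw [← hO] at this; exact this
  have hy : E v y := by
    have : y ∈ ({x, y} : Set V) := by simp
    rw [← hO] at this; exact this
  obtain ⟨q1, hq1n, hv1, hx1⟩ := exists_idx_of_edge hc hn hx
  obtain ⟨q2, hq2n, hv2, hy2⟩ := exists_idx_of_edge hc hn hy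
  have hq12 : q1 ≠ q2 := by rintro rfl; exact hxy (hx1.trans hy2.symm)
  have only1 : ∀ j < c.length, cIdx c hn j = v → j = q1 ∨ j = q2 := by
    intro j hj hjv
    have hedge : E v (cIdx c hn (j+1)) := hjv ▸ edge_of_pair hc hn j
    have hmem : cIdx c hn (j+1) ∈ {z | E v z} := hedge
    rw [hO] at hmem
    rcases hmem with h | h
    · exact Or.inl (idx_inj hc hn hj hq1n (hjv.trans hv1) (h.trans hx1))
    · exact Or.inr (idx_inj hc hn hj hq2n (hjv.trans hv2) (h.trans hy2))
  have hchar : ∀ z, E v z → z = cIdx c hn (q1+1) ∨ z = cIdx c hn (q2+1) := by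
    intro z hz
    have hmem : z ∈ {z | E v z} := hz
    rw [hO] at hmem
    rcases hmem with rfl | rfl
    · exact Or.inl hx1
    · exact Or.inr hy2
  have hne12 : cIdx c hn (q1+1) ≠ cIdx c hn (q2+1) := by
    rw [← hx1, ← hy2]; exact hxy
  rcases Nat.lt_or_ge q1 q2 with h | h
  · exact ⟨q1, q2, h, hq2n, hv1.symm, hv2.symm, only1, hne12, hchar⟩
  · have h' : q2 < q1 := by omega
    exact ⟨q2, q1, h', hq1n, hv2.symm, hv1.symm,
      fun j hj hjv => (only1 j hj hjv).symm, hne12.symm, fun z hz => (hchar z hz).symm⟩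

lemma cover_lemma {c : List V} (hc : IsEulerianCircuit E c) (hn : 0 < c.length)
    (hloop : ∀ x : V, ¬ E x x) {v : V} {p1 p2 : ℕ}
    (h12 : p1 < p2) (hp2n : p2 < c.length)
    (hv1 : cIdx c hn p1 = v) (hv2 : cIdx c hn p2 = v)
    (only : ∀ j < c.length, cIdx c hn j = v → j = p1 ∨ j = p2)
    (ha' : cIdx c hn (p1+1) ≠ v) (hb' : cIdx c hn (p2+1) ≠ v) :
    ∀ j < c.length, ∀ z, cIdx c hn j = z → ∀ (hz' : z ≠ v),
      (delNode E v).Reachable ⟨z, hz'⟩ ⟨cIdx c hn (p1+1), ha'⟩ ∨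
      (delNode E v).Reachable ⟨z, hz'⟩ ⟨cIdx c hn (p2+1), hb'⟩ := by
  have hp1n : p1 < c.length := lt_trans h12 hp2n
  intro j hj z hjz hz'
  have hjv : cIdx c hn j ≠ v := hjz ▸ hz'
  have hjp1 : j ≠ p1 := fun h => hjv (h ▸ hv1)
  have hjp2 : j ≠ p2 := fun h => hjv (h ▸ hv2)
  rcases (by omega : j < p1 ∨ (p1 < j ∧ j < p2) ∨ p2 < j) with hcase | ⟨hc1, hc2⟩ | hcase
  · -- j < p1 : segment from p2+1 to j + c.length
    right
    have hcov : ∀ t ≤ j + c.length - (p2+1), cIdx c hn (p2+1+t) ≠ v := by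
      intro t ht
      apply notv hn only
      all_goals
        rcases Nat.lt_or_ge (p2+1+t) c.length with hlt | hge
        · rw [Nat.mod_eq_of_lt hlt]; omega
        · rw [Nat.mod_eq_sub_mod hge, Nat.mod_eq_of_lt (by omega)]; omega
    have hyEq : cIdx c hn (p2+1+(j + c.length - (p2+1))) = z := by
      rw [(by omega : p2+1+(j + c.length - (p2+1)) = j + c.length)]
      exact (cIdx_congr c hn (Nat.add_mod_right j c.length)).trans hjz
    exact (seg_reach' hc hn hloop (p2+1) _ rfl hyEq hcov hb' hz').symm
  · -- p1 < j < p2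
    left
    have hcov : ∀ t ≤ j - (p1+1), cIdx c hn (p1+1+t) ≠ v := by
      intro t ht
      apply notv hn only
      all_goals rw [Nat.mod_eq_of_lt (by omega)] <;> omega
    have hyEq : cIdx c hn (p1+1+(j - (p1+1))) = z := by
      rw [(by omega : p1+1+(j - (p1+1)) = j)]; exact hjz
    exact (seg_reach' hc hn hloop (p1+1) _ rfl hyEq hcov ha' hz').symm
  · -- p2 < j < n
    right
    have hcov : ∀ t ≤ j - (p2+1), cIdx c hn (p2+1+t) ≠ v := by
      intro t ht
      apply notv hn only
      all_goals rw [Nat.mod_eq_of_lt (by omega)] <;> omega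
    have hyEq : cIdx c hn (p2+1+(j - (p2+1))) = z := by
      rw [(by omega : p2+1+(j - (p2+1)) = j)]; exact hjz
    exact (seg_reach' hc hn hloop (p2+1) _ rfl hyEq hcov hb' hz').symm

lemma sep {c : List V} (hc : IsEulerianCircuit E c) (hn : 0 < c.length)
    (hloop : ∀ x : V, ¬ E x x) (hconn : (underlyingUG E).Connected) {v : V}
    (hcut : IsCutNode (underlyingUG E) v) (hdeg : outdeg E v = 2)
    {x y : V} (hx : E v x) (hy : E v y) (hxy : x ≠ y)
    (hx' : x ≠ v) (hy' : y ≠ v) :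
    ¬ (delNode E v).Reachable ⟨x, hx'⟩ ⟨y, hy'⟩ := by
  intro hreach
  obtain ⟨p1, p2, h12, hp2n, hv1, hv2, only, hne, hchar⟩ := positions hc hn v hdeg
  have hp1n : p1 < c.length := lt_trans h12 hp2n
  have hEa : E v (cIdx c hn (p1+1)) := hv1 ▸ edge_of_pair hc hn p1
  have hEb : E v (cIdx c hn (p2+1)) := hv2 ▸ edge_of_pair hc hn p2
  have ha' : cIdx c hn (p1+1) ≠ v := fun h => hloop v (h ▸ hEa)
  have hb' : cIdx c hn (p2+1) ≠ v := fun h => hloop v (h ▸ hEb)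
  have hab : (delNode E v).Reachable ⟨cIdx c hn (p1+1), ha'⟩ ⟨cIdx c hn (p2+1), hb'⟩ := by
    rcases hchar x hx with h1 | h1 <;> rcases hchar y hy with h2 | h2
    · exact absurd (h1.trans h2.symm) hxy
    · subst h1; subst h2; exact hreach
    · subst h1; subst h2; exact hreach.symm
    · exact absurd (h1.trans h2.symm) hxy
  have cover := cover_lemma hc hn hloop h12 hp2n hv1 hv2 only ha' hb'
  have allreach : ∀ z : {u : V | u ≠ v},
      (delNode E v).Reachable z ⟨cIdx c hn (p1+1), ha'⟩ := by
    rintro ⟨z1, hz1⟩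
    have hz1' : z1 ≠ v := hz1
    obtain ⟨wk⟩ := hconn.preconnected z1 v
    cases wk with
    | nil => exact absurd rfl hz1'
    | cons hadj p =>
      have step : ∀ j < c.length, cIdx c hn j = z1 →
          (delNode E v).Reachable ⟨z1, hz1'⟩ ⟨cIdx c hn (p1+1), ha'⟩ := by
        intro j hjn hjz
        rcases cover j hjn z1 hjz hz1' with h | h
        · exact h
        · exact h.trans hab.symm
      rcases hadj.2 with he | he
      · obtain ⟨j, hjn, hz, _⟩ := exists_idx_of_edge hc hn he
        exact step j hjn hz.symm
      · obtain ⟨j, _, _, hz⟩ := exists_idx_of_edge hc hn he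
        refine step ((j+1) % c.length) (Nat.mod_lt _ hn) ?_
        exact (cIdx_congr c hn (Nat.mod_mod_of_dvd _ dvd_rfl)).trans hz.symm
  apply hcut
  have : Nonempty {u : V | u ≠ v} := ⟨⟨cIdx c hn (p1+1), ha'⟩⟩
  exact ⟨fun z z' => (allreach z).trans (allreach z').symm⟩

lemma forced {c : List V} (hc : IsEulerianCircuit E c) (hn : 0 < c.length)
    (hloop : ∀ x : V, ¬ E x x) {v : V} (hdeg : outdeg E v = 2)
    {u w : V} (hu : E u v) (happ : Appears [u, v, w] c) :
    ∀ z, E v z → z ≠ w → ∀ (hu' : u ≠ v) (hz' : z ≠ v),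
      (delNode E v).Reachable ⟨u, hu'⟩ ⟨z, hz'⟩ := by
  obtain ⟨p1, p2, h12, hp2n, hv1, hv2, only, hne, hchar⟩ := positions hc hn v hdeg
  have hp1n : p1 < c.length := lt_trans h12 hp2n
  obtain ⟨i, hui, hvi, hwi⟩ := appears_elim hn happ
  intro z hz hzw hu' hz'
  have hEa : E v (cIdx c hn (p1+1)) := hv1 ▸ edge_of_pair hc hn p1
  have hEb : E v (cIdx c hn (p2+1)) := hv2 ▸ edge_of_pair hc hn p2
  have ha' : cIdx c hn (p1+1) ≠ v := fun h => hloop v (h ▸ hEa)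
  have hb' : cIdx c hn (p2+1) ≠ v := fun h => hloop v (h ▸ hEb)
  have hq : (i+1) % c.length = p1 ∨ (i+1) % c.length = p2 := by
    apply only _ (Nat.mod_lt _ hn)
    exact (cIdx_congr c hn (Nat.mod_mod_of_dvd _ dvd_rfl)).trans hvi.symm
  rcases hq with hq | hq
  · -- w = cIdx (p1+1), z = cIdx (p2+1), u = cIdx (p1 + n - 1)
    have hmod : (i+1) % c.length = p1 % c.length := by rw [hq, Nat.mod_eq_of_lt hp1n]
    have hw_a : w = cIdx c hn (p1+1) := by
      rw [hwi]
      exact cIdx_congr c hn (Nat.ModEq.add_right 1 hmod)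
    have hz_b : z = cIdx c hn (p2+1) := by
      rcases hchar z hz with h | h
      · exact absurd (h.trans hw_a.symm) hzw
      · exact h
    have hgap : p2 + 2 ≤ p1 + c.length := by
      by_contra hg
      have h1 : p1 = 0 ∧ p2 + 1 = c.length := by omega
      apply hb'
      refine (cIdx_congr c hn ?_).trans hv1
      rw [h1.2, Nat.mod_self, h1.1]
      exact (Nat.zero_mod _).symm
    have hu_i : u = cIdx c hn (p1 + c.length - 1) := by
      rw [hui]
      apply cIdx_congr
      refine Nat.ModEq.add_right_cancel' 1 ?_
      show (i+1) % c.length = (p1 + c.length - 1 + 1) % c.length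
      rw [(by omega : p1 + c.length - 1 + 1 = p1 + c.length), Nat.add_mod_right]
      exact hmod
    have hcov : ∀ t ≤ p1 + c.length - 1 - (p2+1), cIdx c hn (p2+1+t) ≠ v := by
      intro t ht
      apply notv hn only
      all_goals
        rcases Nat.lt_or_ge (p2+1+t) c.length with hlt | hge
        · rw [Nat.mod_eq_of_lt hlt]; omega
        · rw [Nat.mod_eq_sub_mod hge, Nat.mod_eq_of_lt (by omega)]; omega
    have hyEq : cIdx c hn (p2+1+(p1 + c.length - 1 - (p2+1))) = u := by
      rw [(by omega : p2+1+(p1 + c.length - 1 - (p2+1)) = p1 + c.length - 1)]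
      exact hu_i.symm
    have r := seg_reach' hc hn hloop (p2+1) _ rfl hyEq hcov hb' hu'
    subst hz_b
    exact r.symm
  · -- w = cIdx (p2+1), z = cIdx (p1+1), u = cIdx (p2 - 1)
    have hmod : (i+1) % c.length = p2 % c.length := by rw [hq, Nat.mod_eq_of_lt hp2n]
    have hw_b : w = cIdx c hn (p2+1) := by
      rw [hwi]
      exact cIdx_congr c hn (Nat.ModEq.add_right 1 hmod)
    have hz_a : z = cIdx c hn (p1+1) := by
      rcases hchar z hz with h | h
      · exact h
      · exact absurd (h.trans hw_b.symm) hzw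
    have hgap : p1 + 2 ≤ p2 := by
      by_contra hg
      have h1 : p2 = p1 + 1 := by omega
      apply ha'
      rw [(by omega : p1 + 1 = p2)]
      exact hv2
    have hu_i : u = cIdx c hn (p2 - 1) := by
      rw [hui]
      apply cIdx_congr
      refine Nat.ModEq.add_right_cancel' 1 ?_
      show (i+1) % c.length = (p2 - 1 + 1) % c.length
      rw [(by omega : p2 - 1 + 1 = p2)]
      exact hmod
    have hcov : ∀ t ≤ p2 - 1 - (p1+1), cIdx c hn (p1+1+t) ≠ v := by
      intro t ht
      apply notv hn only
      all_goals rw [Nat.mod_eq_of_lt (by omega)] <;> omega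
    have hyEq : cIdx c hn (p1+1+(p2 - 1 - (p1+1))) = u := by
      rw [(by omega : p1+1+(p2 - 1 - (p1+1)) = p2 - 1)]
      exact hu_i.symm
    have r := seg_reach' hc hn hloop (p1+1) _ rfl hyEq hcov ha' hu'
    subst hz_a
    exact r.symm

end ForcedSucc

open ForcedSucc in
/-- If every node is in `A(G)`, then every edge `(u,v)` is followed by a unique
edge `(v,w)` in every Eulerian circuit. -/
theorem A_eq_V_forced_successor {V : Type*} [Fintype V] (E : V → V → Prop)
    (hloop : ∀ x : V, ¬ E x x) (hconn : (underlyingUG E).Connected)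
    (heul : ∃ c : List V, IsEulerianCircuit E c)
    (hA : ∀ v : V, inA E v) :
    ∀ u v : V, E u v → ∃! w : V, E v w ∧
      ∀ c : List V, IsEulerianCircuit E c → Appears [u, v, w] c := by
  have hA' : ∀ v : V, outdeg E v = 1 ∨ (outdeg E v = 2 ∧ IsCutNode (underlyingUG E) v) :=
    fun v => hA v

  intro u v huv
  obtain ⟨c0, hc0⟩ := heul
  have hn0 : 0 < c0.length := List.length_pos_iff.mpr hc0.1
  have h20 : 2 ≤ c0.length := two_le_length hc0 hn0 hloop huv
  obtain ⟨i, hin, hui, hvi⟩ := exists_idx_of_edge hc0 hn0 huv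
  have hEvw : E v (cIdx c0 hn0 (i+2)) := by rw [hvi]; exact edge_of_pair hc0 hn0 (i+1)
  have happ0 : Appears [u, v, cIdx c0 hn0 (i+2)] c0 := by
    rw [hui, hvi]; exact appears_of_idx c0 hn0 h20 i
  set w := cIdx c0 hn0 (i+2) with hwdef
  have hsucc : ∀ c, IsEulerianCircuit E c → Appears [u, v, w] c := by
    intro c hcc
    have hn : 0 < c.length := List.length_pos_iff.mpr hcc.1
    have h2c : 2 ≤ c.length := two_le_length hcc hn hloop huv
    obtain ⟨j, hjn, huj, hvj⟩ := exists_idx_of_edge hcc hn huv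
    have happc : Appears [u, v, cIdx c hn (j+2)] c := by
      rw [huj, hvj]; exact appears_of_idx c hn h2c j
    have hEvwc : E v (cIdx c hn (j+2)) := by rw [hvj]; exact edge_of_pair hcc hn (j+1)
    suffices hww : cIdx c hn (j+2) = w by rwa [hww] at happc
    rcases hA' v with hd1 | ⟨hd2, hcut⟩
    · obtain ⟨x, hx⟩ := Set.ncard_eq_one.mp (hd1 : Set.ncard {z | E v z} = 1)
      have e1 : w ∈ {z | E v z} := hEvw
      have e2 : cIdx c hn (j+2) ∈ {z | E v z} := hEvwc
      rw [hx] at e1 e2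
      exact e2.trans e1.symm
    · by_contra hww
      have hu' : u ≠ v := fun h => hloop v (h ▸ huv)
      have hw' : w ≠ v := fun h => hloop v (h ▸ hEvw)
      have hwc' : cIdx c hn (j+2) ≠ v := fun h => hloop v (h ▸ hEvwc)
      have r1 := forced hc0 hn0 hloop hd2 huv happ0 (cIdx c hn (j+2)) hEvwc hww hu' hwc'
      have r2 := forced hcc hn hloop hd2 huv happc w hEvw (fun h => hww h.symm) hu' hw'
      exact sep hc0 hn0 hloop hconn hcut hd2 hEvw hEvwc (fun h => hww h.symm) hw' hwc'
        (r2.symm.trans r1)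
  refine ⟨w, ⟨hEvw, hsucc⟩, ?_⟩
  intro y hy
  exact succ_unique hc0 hn0 (hy.2 c0 hc0) happ0
end
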